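/- arXiv:2203.11282 — 6 statements merged into one kernel-verified Lean document; each statement's English description precedes it below -/
import Mathlib

section
/- Let M and N be compact metric spaces and (F_i)_{i∈ℕ} a sequence of maps F_i : M → (nonempty closed subsets of N) satisfying: (1) for every x ∈ M, every i, and every open neighborhood U of F_i(x), there is a neighborhood V of x such that every x' ∈ V admits some j > i with F_j(x') ⊆ U; (2) F_{i+1}(x) ⊆ F_i(x) for all i and x; (3) diam(F_i(x)) → 0 for every x. Then the map f : M → N defined by {f(x)} = ⋂_{i∈ℕ} F_i(x) is well-defined and continuous. -/
open Filter Topology Metric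

/-- Fort-type approximation: a nested sequence of set-valued maps with shrinking
diameters and the given lower-semicontinuity property determines a continuous map. -/
theorem stmt0 {M N : Type*} [MetricSpace M] [CompactSpace M] [MetricSpace N] [CompactSpace N]
    (F : ℕ → M → Set N)
    (hcl : ∀ i x, IsClosed (F i x)) (hne : ∀ i x, (F i x).Nonempty)
    (h1 : ∀ x i, ∀ U ∈ nhdsSet (F i x), ∃ V ∈ nhds x, ∀ x' ∈ V, ∃ j > i, F j x' ⊆ U)
    (h2 : ∀ i x, F (i + 1) x ⊆ F i x)
    (h3 : ∀ x, Tendsto (fun i => diam (F i x)) atTop (nhds 0)) :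
    ∃ f : M → N, Continuous f ∧ ∀ x, (⋂ i, F i x) = {f x} := by
  have hanti : ∀ x, Antitone (fun i => F i x) := fun x =>
    antitone_nat_of_succ_le (fun i => h2 i x)
  have hInter : ∀ x, (⋂ i, F i x).Nonempty := by
    intro x
    exact IsCompact.nonempty_iInter_of_sequence_nonempty_isCompact_isClosed
      (fun i => F i x) (fun i => h2 i x) (fun i => hne i x)
      ((hcl 0 x).isCompact) (fun i => hcl i x)
  choose f hf using hInter
  have hfmem : ∀ x i, f x ∈ F i x := fun x i => Set.mem_iInter.mp (hf x) i
  have hsingle : ∀ x, (⋂ i, F i x) = {f x} := by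
    intro x
    apply Set.eq_singleton_iff_unique_mem.mpr
    refine ⟨hf x, fun z hz => ?_⟩
    have hz' : ∀ i, z ∈ F i x := Set.mem_iInter.mp hz
    have hd : ∀ i, dist z (f x) ≤ diam (F i x) := fun i =>
      dist_le_diam_of_mem ((hcl i x).isCompact.isBounded) (hz' i) (hfmem x i)
    have : dist z (f x) ≤ 0 := ge_of_tendsto (h3 x) (Eventually.of_forall hd)
    exact dist_le_zero.mp this
  refine ⟨f, ?_, hsingle⟩
  rw [Metric.continuous_iff]
  intro x ε hε
  -- choose i with diam (F i x) < ε/3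
  obtain ⟨i, hi⟩ := (Metric.tendsto_atTop.mp (h3 x) (ε / 3) (by linarith)).imp
    (fun i h => h i le_rfl)
  have hidiam : diam (F i x) < ε / 3 := by
    have := hi; rw [Real.dist_eq, abs_sub_lt_iff] at this; linarith [this.1]
  -- the thickening is an open neighborhood of F i x
  have hU : thickening (ε / 3) (F i x) ∈ nhdsSet (F i x) :=
    (isOpen_thickening).mem_nhdsSet.mpr (self_subset_thickening (by linarith) _)
  obtain ⟨V, hV, hVprop⟩ := h1 x i _ hU
  obtain ⟨δ, hδ, hball⟩ := Metric.mem_nhds_iff.mp hV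
  refine ⟨δ, hδ, fun y hy => ?_⟩
  obtain ⟨j, hj, hjsub⟩ := hVprop y (hball hy)
  have hfy : f y ∈ thickening (ε / 3) (F i x) := hjsub (hfmem y j)
  obtain ⟨z, hz, hzd⟩ := Metric.mem_thickening_iff.mp hfy
  have hzx : dist z (f x) ≤ diam (F i x) :=
    dist_le_diam_of_mem ((hcl i x).isCompact.isBounded) hz (hfmem x i)
  calc dist (f y) (f x) ≤ dist (f y) z + dist z (f x) := dist_triangle _ _ _
    _ < ε := by linarith
end

section
/- Let X be a metrizable, locally compact, strongly locally homogeneous space and let X̄ be a metric compactification of X (i.e. a compact metric space containing X as a dense open subspace). If A and B are countable dense subsets of X, then there exists a homeomorphism f : X̄ → X̄ with f(A) = B and f restricted to X̄ − X equal to the identity. -/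
open Set Filter Topology
open scoped Classical


lemma extAux {Xb : Type*} [TopologicalSpace Xb] {X U : Set Xb} (hXopen : IsOpen X)
    (hU : closure U ⊆ X) (f : X ≃ₜ X) (hf : ∀ z : X, (z : Xb) ∉ U → f z = z) :
    Continuous (fun x => if hx : x ∈ X then (f ⟨x, hx⟩ : Xb) else x) := by
  set g := fun x => if hx : x ∈ X then (f ⟨x, hx⟩ : Xb) else x with hg
  rw [continuous_iff_continuousAt]
  intro x
  by_cases hx : x ∈ X
  · have h1 : ContinuousOn g X := by
      rw [continuousOn_iff_continuous_restrict]
      have : X.domRestrict g = fun z : X => (f z : Xb) := by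
        funext z; show (if hx : (z:Xb) ∈ X then (f ⟨z, hx⟩ : Xb) else z) = f z; rw [dif_pos z.2]
      rw [this]
      exact continuous_subtype_val.comp f.continuous
    exact h1.continuousAt (hXopen.mem_nhds hx)
  · have hW : x ∈ (closure U)ᶜ := fun hc => hx (hU hc)
    have h1 : ContinuousOn g (closure U)ᶜ := by
      apply continuousOn_id.congr
      intro y hy
      by_cases hyX : y ∈ X
      · simp only [hg, dif_pos hyX, id]
        have := hf ⟨y, hyX⟩ (fun h => hy (subset_closure h))
        rw [this]
      · simp [hg, hyX, id]
    exact h1.continuousAt (isClosed_closure.isOpen_compl.mem_nhds hW)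

lemma extendHomeo {Xb : Type*} [TopologicalSpace Xb] {X U : Set Xb} (hXopen : IsOpen X)
    (hU : closure U ⊆ X) (f : X ≃ₜ X) (hf : ∀ z : X, (z : Xb) ∉ U → f z = z) :
    ∃ h : Xb ≃ₜ Xb, (∀ z : X, h z = (f z : Xb)) ∧ (∀ z ∉ X, h z = z) := by
  have hfsymm : ∀ z : X, (z : Xb) ∉ U → f.symm z = z := by
    intro z hz
    conv_lhs => rw [← hf z hz]
    exact f.symm_apply_apply z
  refine ⟨⟨⟨fun x => if hx : x ∈ X then (f ⟨x, hx⟩ : Xb) else x,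
            fun x => if hx : x ∈ X then (f.symm ⟨x, hx⟩ : Xb) else x, ?_, ?_⟩,
          extAux hXopen hU f hf, extAux hXopen hU f.symm hfsymm⟩, ?_, ?_⟩
  · intro x
    by_cases hx : x ∈ X
    · simp only [dif_pos hx]
      rw [dif_pos (f ⟨x, hx⟩).2, Subtype.eta, f.symm_apply_apply]
    · simp [hx]
  · intro x
    by_cases hx : x ∈ X
    · simp only [dif_pos hx]
      rw [dif_pos (f.symm ⟨x, hx⟩).2, Subtype.eta, f.apply_symm_apply]
    · simp [hx]
  · intro z
    show (if hx : (z:Xb) ∈ X then (f ⟨z, hx⟩ : Xb) else z) = f z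
    rw [dif_pos z.2, Subtype.eta]
  · intro z hz
    show (if hx : z ∈ X then (f ⟨z, hx⟩ : Xb) else z) = z
    rw [dif_neg hz]


lemma depChoice {σ : Type*} (P : ℕ → σ → Prop) (R : ℕ → σ → σ → Prop)
    (h0 : ∃ s, P 0 s) (hstep : ∀ n s, P n s → ∃ t, P (n+1) t ∧ R n s t) :
    ∃ u : ℕ → σ, (∀ n, P n (u n)) ∧ ∀ n, R n (u n) (u (n+1)) := by
  choose f hf hf' using hstep
  let u : ∀ n : ℕ, {s // P n s} := fun n =>
    Nat.rec ⟨h0.choose, h0.choose_spec⟩ (fun n s => ⟨f n s.1 s.2, hf n s.1 s.2⟩) n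
  exact ⟨fun n => (u n).1, fun n => (u n).2, fun n => hf' n (u n).1 (u n).2⟩

lemma modPick {Xb : Type*} [MetricSpace Xb] [CompactSpace Xb] (G : Xb ≃ₜ Xb) (ε c : ℝ)
    (hε : 0 < ε) (hc : 0 < c) :
    ∃ ε' : ℝ, 0 < ε' ∧ ε' ≤ ε/2 ∧ ε' ≤ c ∧
      ∀ u v : Xb, dist u v ≤ 8*ε' → dist (G.symm u) (G.symm v) ≤ c := by
  have huc : UniformContinuous ⇑G.symm :=
    CompactSpace.uniformContinuous_of_continuous G.symm.continuous
  rw [Metric.uniformContinuous_iff] at huc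
  obtain ⟨δ, hδ, hδ'⟩ := huc c hc
  refine ⟨min (ε/2) (min c (δ/9)), by positivity, min_le_left _ _,
    le_trans (min_le_right _ _) (min_le_left _ _), ?_⟩
  intro u v huv
  have h1 : min (ε/2) (min c (δ/9)) ≤ δ/9 := le_trans (min_le_right _ _) (min_le_right _ _)
  exact (hδ' (lt_of_le_of_lt huv (by linarith))).le

/-- `X` is strongly locally homogeneous: for every `x` and neighbourhood `U` of `x`
there is an open `V` with `x ∈ V ⊆ U` such that every `y ∈ V` is the image of `x`
under a self-homeomorphism of `X` fixing `X − U` pointwise. -/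
def StronglyLocallyHomogeneous (X : Type*) [TopologicalSpace X] : Prop :=
  ∀ x : X, ∀ U ∈ nhds x, ∃ V : Set X, IsOpen V ∧ x ∈ V ∧ V ⊆ U ∧
    ∀ y ∈ V, ∃ f : X ≃ₜ X, f x = y ∧ ∀ z ∉ U, f z = z

lemma pushHomeo {Xb : Type*} [MetricSpace Xb] {X : Set Xb} (hXopen : IsOpen X)
    (hlc : LocallyCompactSpace ↥X) (hslh : StronglyLocallyHomogeneous ↥X)
    {D : Set Xb} (hD : Dense D) {p : Xb} (hp : p ∈ X) (S : Finset Xb) (hpS : p ∉ S)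
    {ε : ℝ} (hε : 0 < ε) :
    ∃ h : Xb ≃ₜ Xb, h p ∈ D ∧ h p ∉ (S : Set Xb) ∧ (∀ s ∈ S, h s = s) ∧
      (∀ z ∉ X, h z = z) ∧ (∀ x, dist (h x) x ≤ ε) := by
  haveI := hlc
  set W0 : Set Xb := X ∩ Metric.ball p (ε/3) ∩ (↑S : Set Xb)ᶜ with hW0
  have hW0open : IsOpen W0 :=
    (hXopen.inter Metric.isOpen_ball).inter S.finite_toSet.isClosed.isOpen_compl
  have hpW0 : p ∈ W0 := ⟨⟨hp, Metric.mem_ball_self (by linarith)⟩, hpS⟩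
  set V0 : Set ↥X := Subtype.val ⁻¹' W0 with hV0
  have hV0open : IsOpen V0 := hW0open.preimage continuous_subtype_val
  have hpV0 : (⟨p, hp⟩ : ↥X) ∈ V0 := hpW0
  obtain ⟨K, hKcomp, hKint, hKsub⟩ := exists_compact_subset hV0open hpV0
  obtain ⟨V, hVopen, hpV, hVU, hVhom⟩ :=
    hslh ⟨p, hp⟩ (interior K) (isOpen_interior.mem_nhds hKint)
  have hopenV : IsOpen (Subtype.val '' V) := hXopen.isOpenMap_subtype_val V hVopen
  obtain ⟨y, hyD, hyV⟩ := hD.exists_mem_open hopenV ⟨p, ⟨⟨p, hp⟩, hpV, rfl⟩⟩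
  obtain ⟨y', hy'V, hy'⟩ := hyV
  obtain ⟨f, hfp, hfid⟩ := hVhom y' hy'V
  set Usup : Set Xb := Subtype.val '' interior K with hUsup
  have hUsubK : Usup ⊆ Subtype.val '' K := image_mono interior_subset
  have hKXb : IsCompact (Subtype.val '' K) := hKcomp.image continuous_subtype_val
  have hclU : closure Usup ⊆ X := by
    have h1 : closure Usup ⊆ Subtype.val '' K := hKXb.isClosed.closure_subset_iff.mpr hUsubK
    intro x hx
    obtain ⟨z, _, rfl⟩ := h1 hx
    exact z.2
  have hfid' : ∀ z : ↥X, (z : Xb) ∉ Usup → f z = z := by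
    intro z hz
    exact hfid z (fun hzU => hz ⟨z, hzU, rfl⟩)
  obtain ⟨h, hhX, hhoff⟩ := extendHomeo hXopen hclU f hfid'
  have hUW0 : Usup ⊆ W0 := by
    rintro x ⟨z, hz, rfl⟩
    exact hKsub (interior_subset hz)
  have hdich : ∀ x, h x = x ∨ (x ∈ Usup ∧ h x ∈ Usup) := by
    intro x
    by_cases hx : x ∈ X
    · by_cases hxU : x ∈ Usup
      · by_cases hfx : f ⟨x, hx⟩ ∈ interior K
        · exact Or.inr ⟨hxU, by rw [hhX ⟨x, hx⟩]; exact ⟨_, hfx, rfl⟩⟩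
        · left
          have h1 : f (f ⟨x, hx⟩) = f ⟨x, hx⟩ := hfid _ hfx
          have h2 : f ⟨x, hx⟩ = ⟨x, hx⟩ := f.injective h1
          rw [hhX ⟨x, hx⟩, h2]
      · left
        have hzi : (⟨x, hx⟩ : ↥X) ∉ interior K := fun hzU => hxU ⟨_, hzU, rfl⟩
        rw [hhX ⟨x, hx⟩, hfid _ hzi]
    · exact Or.inl (hhoff x hx)
  have hhp : h p = y := by
    rw [hhX ⟨p, hp⟩, hfp, hy']
  have hyU : y ∈ Usup := ⟨y', hVU hy'V, hy'⟩
  refine ⟨h, by rwa [hhp], ?_, ?_, hhoff, ?_⟩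
  · rw [hhp]; exact (hUW0 hyU).2
  · intro s hs
    rcases hdich s with h1 | h1
    · exact h1
    · exact absurd hs ((hUW0 h1.1).2)
  · intro x
    rcases hdich x with h1 | h1
    · rw [h1, dist_self]; exact hε.le
    · have hx1 := (hUW0 h1.1).1.2
      have hx2 := (hUW0 h1.2).1.2
      rw [Metric.mem_ball] at hx1 hx2
      calc dist (h x) x ≤ dist (h x) p + dist p x := dist_triangle _ _ _
        _ ≤ ε/3 + ε/3 := by rw [dist_comm p x]; exact add_le_add hx2.le hx1.le
        _ ≤ ε := by linarith

/-- Bennett-type theorem for compactifications: countable dense subsets of a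
metrizable locally compact strongly locally homogeneous space `X` can be matched by
a homeomorphism of a metric compactification `X̄` which is the identity on `X̄ − X`. -/
theorem stmt2 {Xb : Type*} [MetricSpace Xb] [CompactSpace Xb] (X : Set Xb)
    (hXopen : IsOpen X) (hXdense : Dense X)
    (hlc : LocallyCompactSpace ↥X)
    (hslh : StronglyLocallyHomogeneous ↥X)
    (A B : Set Xb) (hA : A ⊆ X) (hB : B ⊆ X)
    (hAc : A.Countable) (hBc : B.Countable) (hAd : Dense A) (hBd : Dense B) :
    ∃ f : Xb ≃ₜ Xb, f '' A = B ∧ ∀ z ∉ X, f z = z := by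
  classical
  obtain hemp | hne := isEmpty_or_nonempty Xb
  · exact ⟨Homeomorph.refl Xb,
      by simp [Set.eq_empty_of_isEmpty A, Set.eq_empty_of_isEmpty B], fun z _ => rfl⟩
  obtain ⟨a, ha⟩ := hAc.exists_eq_range hAd.nonempty
  obtain ⟨b, hb⟩ := hBc.exists_eq_range hBd.nonempty
  set P : ℕ → (Xb ≃ₜ Xb) × Finset Xb × ℝ → Prop := fun n s =>
    (↑s.2.1 ⊆ A) ∧ (∀ x ∈ s.2.1, s.1 x ∈ B) ∧ (∀ z ∉ X, s.1 z = z) ∧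
    (∀ i, 2*i < n → a i ∈ s.2.1) ∧ (∀ i, 2*i+1 < n → b i ∈ ⇑s.1 '' ↑s.2.1) ∧
    0 < s.2.2 ∧ s.2.2 ≤ (1/2:ℝ)^n ∧
    (∀ u v : Xb, dist u v ≤ 8 * s.2.2 → dist (s.1.symm u) (s.1.symm v) ≤ (1/2:ℝ)^n)
    with hPdef
  set R : ℕ → (Xb ≃ₜ Xb) × Finset Xb × ℝ → (Xb ≃ₜ Xb) × Finset Xb × ℝ → Prop := fun _ s t =>
    s.2.1 ⊆ t.2.1 ∧ (∀ x ∈ s.2.1, t.1 x = s.1 x) ∧ (∀ x, dist (t.1 x) (s.1 x) ≤ s.2.2) ∧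
    t.2.2 ≤ s.2.2/2 with hRdef
  have h0 : ∃ s, P 0 s := by
    refine ⟨(Homeomorph.refl Xb, ∅, 1/8), ?_⟩
    simp only [hPdef]
    refine ⟨by simp, by simp, fun z _ => rfl, by omega, by omega, by norm_num, by norm_num, ?_⟩
    intro u v huv
    simpa using by linarith [huv]
  have hstep : ∀ n s, P n s → ∃ t, P (n+1) t ∧ R n s t := by
    intro n s hs
    obtain ⟨F, dom, ε⟩ := s
    simp only [hPdef] at hs
    obtain ⟨hdomA, hdomB, hFoff, hia, hib, hε, hεle, hmod⟩ := hs
    have hFX : ∀ x ∈ X, F x ∈ X := by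
      intro x hx
      by_contra hFx
      have h1 : F (F x) = F x := hFoff _ hFx
      have h2 : F x = x := F.injective h1
      rw [h2] at hFx
      exact hFx hx
    rcases Nat.even_or_odd n with ⟨i, hi⟩ | ⟨i, hi⟩
    · by_cases hai : a i ∈ dom
      · obtain ⟨ε', he0, he2, hec, hemod⟩ := modPick F ε ((1/2:ℝ)^(n+1)) hε (by positivity)
        refine ⟨(F, dom, ε'), ?_, ?_⟩
        · simp only [hPdef]
          refine ⟨hdomA, hdomB, hFoff, ?_, ?_, he0, hec, hemod⟩
          · intro i' hi'
            rcases Nat.lt_or_ge (2*i') n with hlt | hge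
            · exact hia i' hlt
            · have : i' = i := by omega
              rwa [this]
          · intro i' hi'
            exact hib i' (by omega)
        · simp only [hRdef]
          refine ⟨Finset.Subset.refl _, ?_, fun x => by simp [hε.le], he2⟩
          first | exact fun x _ => trivial | trivial | exact fun x _ => rfl
      · have haiA : a i ∈ A := ha ▸ mem_range_self i
        have hpX : F (a i) ∈ X := hFX _ (hA haiA)
        have hpS : F (a i) ∉ dom.image (⇑F) := by
          intro hmem
          obtain ⟨x, hx, hxe⟩ := Finset.mem_image.mp hmem
          exact hai (F.injective hxe ▸ hx)
        obtain ⟨h, hhD, hhS, hhfix, hhoff, hhd⟩ :=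
          pushHomeo hXopen hlc hslh hBd hpX (dom.image (⇑F)) hpS hε
        obtain ⟨ε', he0, he2, hec, hemod⟩ :=
          modPick (F.trans h) ε ((1/2:ℝ)^(n+1)) hε (by positivity)
        have hfixF : ∀ x ∈ dom, h (F x) = F x := fun x hx =>
          hhfix (F x) (Finset.mem_image.mpr ⟨x, hx, rfl⟩)
        refine ⟨(F.trans h, insert (a i) dom, ε'), ?_, ?_⟩
        · simp only [hPdef]
          refine ⟨?_, ?_, ?_, ?_, ?_, he0, hec, hemod⟩
          · intro x hx
            simp only [Finset.coe_insert, Set.mem_insert_iff, Finset.mem_coe] at hx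
            rcases hx with rfl | hx
            · exact haiA
            · exact hdomA hx
          · intro x hx
            rcases Finset.mem_insert.mp hx with rfl | hx
            · exact hhD
            · show h (F x) ∈ B
              rw [hfixF x hx]
              exact hdomB x hx
          · intro z hz
            show h (F z) = z
            rw [hFoff z hz]
            exact hhoff z hz
          · intro i' hi'
            rcases Nat.lt_or_ge (2*i') n with hlt | hge
            · exact Finset.mem_insert_of_mem (hia i' hlt)
            · have : i' = i := by omega
              rw [this]
              exact Finset.mem_insert_self _ _
          · intro i' hi'
            obtain ⟨x, hx, hxe⟩ := hib i' (by omega)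
            refine ⟨x, by simp only [Finset.coe_insert, Set.mem_insert_iff]; exact Or.inr hx, ?_⟩
            show h (F x) = b i'
            rw [hfixF x (Finset.mem_coe.mp hx)]
            exact hxe
        · simp only [hRdef]
          exact ⟨Finset.subset_insert _ _, fun x hx => hfixF x hx,
            fun x => hhd (F x), he2⟩
    · by_cases hbi : b i ∈ ⇑F '' (↑dom : Set Xb)
      · obtain ⟨ε', he0, he2, hec, hemod⟩ := modPick F ε ((1/2:ℝ)^(n+1)) hε (by positivity)
        refine ⟨(F, dom, ε'), ?_, ?_⟩
        · simp only [hPdef]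
          refine ⟨hdomA, hdomB, hFoff, ?_, ?_, he0, hec, hemod⟩
          · intro i' hi'
            exact hia i' (by omega)
          · intro i' hi'
            rcases Nat.lt_or_ge (2*i'+1) n with hlt | hge
            · exact hib i' hlt
            · have : i' = i := by omega
              rwa [this]
        · simp only [hRdef]
          refine ⟨Finset.Subset.refl _, ?_, fun x => by simp [hε.le], he2⟩
          first | exact fun x _ => trivial | trivial | exact fun x _ => rfl
      · have hbiB : b i ∈ B := hb ▸ mem_range_self i
        have hpX : b i ∈ X := hB hbiB
        have hdenseFA : Dense (⇑F '' A) := by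
          rw [dense_iff_closure_eq, ← Homeomorph.image_closure, hAd.closure_eq, image_univ]
          exact F.surjective.range_eq
        have hpS : b i ∉ dom.image (⇑F) := by
          intro hmem
          obtain ⟨x, hx, hxe⟩ := Finset.mem_image.mp hmem
          exact hbi ⟨x, Finset.mem_coe.mpr hx, hxe⟩
        obtain ⟨h, hhD, hhS, hhfix, hhoff, hhd⟩ :=
          pushHomeo hXopen hlc hslh hdenseFA hpX (dom.image (⇑F)) hpS hε
        obtain ⟨x0, hx0A, hx0⟩ := hhD
        have hfixF : ∀ x ∈ dom, h.symm (F x) = F x := by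
          intro x hx
          have h1 : h (F x) = F x := hhfix (F x) (Finset.mem_image.mpr ⟨x, hx, rfl⟩)
          exact h.symm_apply_eq.mpr h1.symm
        have hsymoff : ∀ z ∉ X, h.symm z = z := by
          intro z hz
          exact h.symm_apply_eq.mpr (hhoff z hz).symm
        have hhd' : ∀ x, dist (h.symm x) x ≤ ε := by
          intro x
          have h1 := hhd (h.symm x)
          rwa [h.apply_symm_apply, dist_comm] at h1
        have hx0dom : x0 ∉ dom := by
          intro hx0d
          apply hhS
          rw [← hx0]
          exact Finset.mem_coe.mpr (Finset.mem_image.mpr ⟨x0, hx0d, rfl⟩)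
        obtain ⟨ε', he0, he2, hec, hemod⟩ :=
          modPick (F.trans h.symm) ε ((1/2:ℝ)^(n+1)) hε (by positivity)
        have hFx0 : (F.trans h.symm) x0 = b i := by
          show h.symm (F x0) = b i
          rw [hx0, h.symm_apply_apply]
        refine ⟨(F.trans h.symm, insert x0 dom, ε'), ?_, ?_⟩
        · simp only [hPdef]
          refine ⟨?_, ?_, ?_, ?_, ?_, he0, hec, hemod⟩
          · intro x hx
            simp only [Finset.coe_insert, Set.mem_insert_iff, Finset.mem_coe] at hx
            rcases hx with rfl | hx
            · exact hx0A
            · exact hdomA hx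
          · intro x hx
            rcases Finset.mem_insert.mp hx with rfl | hx
            · rw [hFx0]
              exact hbiB
            · show h.symm (F x) ∈ B
              rw [hfixF x hx]
              exact hdomB x hx
          · intro z hz
            show h.symm (F z) = z
            rw [hFoff z hz]
            exact hsymoff z hz
          · intro i' hi'
            exact Finset.mem_insert_of_mem (hia i' (by omega))
          · intro i' hi'
            rcases Nat.lt_or_ge (2*i'+1) n with hlt | hge
            · obtain ⟨x, hx, hxe⟩ := hib i' hlt
              refine ⟨x, by simp only [Finset.coe_insert, Set.mem_insert_iff]; exact Or.inr hx, ?_⟩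
              show h.symm (F x) = b i'
              rw [hfixF x (Finset.mem_coe.mp hx)]
              exact hxe
            · have : i' = i := by omega
              rw [this]
              exact ⟨x0, by simp, hFx0⟩
        · simp only [hRdef]
          exact ⟨Finset.subset_insert _ _, fun x hx => hfixF x hx,
            fun x => hhd' (F x), he2⟩
  obtain ⟨u, hPu, hRu⟩ := depChoice P R h0 hstep
  simp only [hPdef] at hPu
  simp only [hRdef] at hRu
  set Fn : ℕ → Xb ≃ₜ Xb := fun n => (u n).1 with hFn
  set en : ℕ → ℝ := fun n => (u n).2.2 with hen
  have hεpos : ∀ n, 0 < en n := fun n => (hPu n).2.2.2.2.2.1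
  have hεle : ∀ n, en n ≤ (1/2:ℝ)^n := fun n => (hPu n).2.2.2.2.2.2.1
  have hmod : ∀ n, ∀ x y : Xb, dist x y ≤ 8 * en n →
      dist ((Fn n).symm x) ((Fn n).symm y) ≤ (1/2:ℝ)^n := fun n => (hPu n).2.2.2.2.2.2.2
  have hoff : ∀ n, ∀ z ∉ X, Fn n z = z := fun n => (hPu n).2.2.1
  have hmono : ∀ n, (u n).2.1 ⊆ (u (n+1)).2.1 := fun n => (hRu n).1
  have heq1 : ∀ n, ∀ x ∈ (u n).2.1, Fn (n+1) x = Fn n x := fun n => (hRu n).2.1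
  have hd1 : ∀ n x, dist (Fn (n+1) x) (Fn n x) ≤ en n := fun n => (hRu n).2.2.1
  have hhalf : ∀ n, en (n+1) ≤ en n / 2 := fun n => (hRu n).2.2.2
  have hsub : ∀ n m, n ≤ m → (u n).2.1 ⊆ (u m).2.1 := by
    intro n m hnm
    induction m, hnm using Nat.le_induction with
    | base => exact Finset.Subset.refl _
    | succ m hm ih => exact ih.trans (hmono m)
  have hconst : ∀ n m, n ≤ m → ∀ x ∈ (u n).2.1, Fn m x = Fn n x := by
    intro n m hnm
    induction m, hnm using Nat.le_induction with
    | base => intro x _; rfl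
    | succ m hm ih =>
      intro x hx
      rw [heq1 m x (hsub n m hm hx), ih x hx]
  have htail : ∀ n m, n ≤ m → ∀ x, dist (Fn m x) (Fn n x) ≤ 2 * en n - 2 * en m := by
    intro n m hnm
    induction m, hnm using Nat.le_induction with
    | base => intro x; simp
    | succ m hm ih =>
      intro x
      have h1 := hd1 m x
      have h2 := ih x
      have h3 := hhalf m
      calc dist (Fn (m+1) x) (Fn n x)
          ≤ dist (Fn (m+1) x) (Fn m x) + dist (Fn m x) (Fn n x) := dist_triangle _ _ _
        _ ≤ en m + (2 * en n - 2 * en m) := add_le_add h1 h2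
        _ ≤ 2 * en n - 2 * en (m+1) := by linarith
  have htail' : ∀ n m, n ≤ m → ∀ x, dist (Fn m x) (Fn n x) ≤ 2 * en n := by
    intro n m hnm x
    have h1 := htail n m hnm x
    have h2 := hεpos m
    linarith
  have hcauchy : ∀ x, CauchySeq (fun n => Fn n x) := by
    intro x
    apply cauchySeq_of_le_tendsto_0 (fun N => 4 * (1/2:ℝ)^N)
    · intro n m N hn hm
      calc dist (Fn n x) (Fn m x)
          ≤ dist (Fn n x) (Fn N x) + dist (Fn m x) (Fn N x) := dist_triangle_right _ _ _
        _ ≤ 2 * en N + 2 * en N := add_le_add (htail' N n hn x) (htail' N m hm x)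
        _ ≤ 4 * (1/2:ℝ)^N := by have := hεle N; linarith
    · simpa using (tendsto_pow_atTop_nhds_zero_of_lt_one
        (by norm_num : (0:ℝ) ≤ 1/2) (by norm_num)).const_mul (4:ℝ)
  have hFex : ∀ x, ∃ y, Tendsto (fun n => Fn n x) atTop (𝓝 y) :=
    fun x => cauchySeq_tendsto_of_complete (hcauchy x)
  choose f hf using hFex
  have hdistf : ∀ n x, dist (f x) (Fn n x) ≤ 2 * en n := by
    intro n x
    have h1 : Tendsto (fun m => dist (Fn m x) (Fn n x)) atTop (𝓝 (dist (f x) (Fn n x))) :=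
      (hf x).dist tendsto_const_nhds
    apply le_of_tendsto h1
    filter_upwards [eventually_ge_atTop n] with m hm
    exact htail' n m hm x
  have hcontf : Continuous f := by
    have hunif : TendstoUniformly (fun n x => Fn n x) f atTop := by
      rw [Metric.tendstoUniformly_iff]
      intro δ hδ
      have h2 : Tendsto (fun n : ℕ => 2 * (1/2:ℝ)^n) atTop (𝓝 0) := by
        simpa using (tendsto_pow_atTop_nhds_zero_of_lt_one
          (by norm_num : (0:ℝ) ≤ 1/2) (by norm_num)).const_mul (2:ℝ)
      filter_upwards [h2.eventually (gt_mem_nhds hδ)] with n hn x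
      calc dist (f x) (Fn n x) ≤ 2 * en n := hdistf n x
        _ ≤ 2 * (1/2:ℝ)^n := by have := hεle n; linarith
        _ < δ := hn
    exact hunif.continuous (Frequently.of_forall fun n => (Fn n).continuous)
  have hinj : Function.Injective f := by
    intro x y hxy
    by_contra hne
    have hdpos : 0 < dist x y := dist_pos.mpr hne
    obtain ⟨n, hn⟩ := exists_pow_lt_of_lt_one hdpos (by norm_num : (1/2:ℝ) < 1)
    have h1 : dist (Fn n x) (Fn n y) ≤ 8 * en n := by
      have h2 := hdistf n x
      have h3 := hdistf n y
      have h4 := hεpos n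
      calc dist (Fn n x) (Fn n y)
          ≤ dist (Fn n x) (f x) + dist (f x) (Fn n y) := dist_triangle _ _ _
        _ = dist (f x) (Fn n x) + dist (f y) (Fn n y) := by rw [dist_comm, hxy]
        _ ≤ 8 * en n := by linarith
    have h5 := hmod n _ _ h1
    rw [Homeomorph.symm_apply_apply, Homeomorph.symm_apply_apply] at h5
    linarith
  have hsurj : Function.Surjective f := by
    intro y
    have hmem : y ∈ closure (range f) := by
      rw [Metric.mem_closure_iff]
      intro δ hδ
      obtain ⟨n, hn⟩ := exists_pow_lt_of_lt_one (show (0:ℝ) < δ/4 by linarith)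
        (by norm_num : (1/2:ℝ) < 1)
      refine ⟨f ((Fn n).symm y), mem_range_self _, ?_⟩
      have h2 := hεle n
      calc dist y (f ((Fn n).symm y))
          = dist (f ((Fn n).symm y)) (Fn n ((Fn n).symm y)) := by
            rw [Homeomorph.apply_symm_apply, dist_comm]
        _ ≤ 2 * en n := hdistf n _
        _ ≤ 2 * (1/2:ℝ)^n := by linarith
        _ < δ := by linarith
    rwa [(isCompact_range hcontf).isClosed.closure_eq] at hmem
  have hfconst : ∀ n x, x ∈ (u n).2.1 → f x = Fn n x := by
    intro n x hx
    refine tendsto_nhds_unique (hf x) ?_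
    have hev : (fun _ : ℕ => Fn n x) =ᶠ[atTop] fun m => Fn m x := by
      filter_upwards [eventually_ge_atTop n] with m hm
      exact (hconst n m hm x hx).symm
    exact Tendsto.congr' hev tendsto_const_nhds
  refine ⟨(Continuous.homeoOfEquivCompactToT2
      (f := Equiv.ofBijective f ⟨hinj, hsurj⟩) hcontf), ?_, ?_⟩
  · apply subset_antisymm
    · rintro y ⟨x, hxA, rfl⟩
      have hxA' := hxA
      rw [ha] at hxA'
      obtain ⟨i, rfl⟩ := hxA'
      have hmem : a i ∈ (u (2*i+1)).2.1 := (hPu (2*i+1)).2.2.2.1 i (by omega)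
      show f (a i) ∈ B
      rw [hfconst (2*i+1) _ hmem]
      exact (hPu (2*i+1)).2.1 _ hmem
    · intro y hy
      rw [hb] at hy
      obtain ⟨i, rfl⟩ := hy
      have hmem : b i ∈ ⇑(Fn (2*i+2)) '' ↑(u (2*i+2)).2.1 :=
        (hPu (2*i+2)).2.2.2.2.1 i (by omega)
      obtain ⟨x, hx, hxe⟩ := hmem
      refine ⟨x, (hPu (2*i+2)).1 hx, ?_⟩
      show f x = b i
      rw [hfconst (2*i+2) x (Finset.mem_coe.mp hx)]
      exact hxe
  · intro z hz
    show f z = z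
    refine tendsto_nhds_unique (hf z) ?_
    have hev : (fun _ : ℕ => z) =ᶠ[atTop] fun n => Fn n z :=
      Eventually.of_forall fun n => (hoff n z hz).symm
    exact Tendsto.congr' hev tendsto_const_nhds
end

section
/- Every metrizable, locally compact, strongly locally homogeneous space is countable dense homogeneous: for any two countable dense subsets A, B of X there is a homeomorphism f : X → X with f(A) = B. -/
open Set Filter Topology Metric

namespace BennettProof

lemma isOpen_range_of_dense {X Y : Type*} [TopologicalSpace X] [TopologicalSpace Y]
    [LocallyCompactSpace X] [T2Space Y] {e : X → Y} (he : Topology.IsEmbedding e)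
    (hd : DenseRange e) : IsOpen (Set.range e) := by
  rw [isOpen_iff_mem_nhds]
  rintro _ ⟨x, rfl⟩
  obtain ⟨K, hKc, hKn⟩ := exists_compact_mem_nhds x
  obtain ⟨U, hUo, hUe⟩ := he.toIsInducing.isOpen_iff.1 (isOpen_interior (s := K))
  have hxU : e x ∈ U := by
    have hx : x ∈ interior K := mem_interior_iff_mem_nhds.2 hKn
    rw [← hUe] at hx; exact hx
  have hsub : U ⊆ Set.range e := by
    have h1 : U ⊆ closure (U ∩ Set.range e) := hd.open_subset_closure_inter hUo
    have h2 : U ∩ Set.range e = e '' (e ⁻¹' U) := (Set.image_preimage_eq_inter_range).symm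
    have h3 : e '' (e ⁻¹' U) ⊆ e '' K := Set.image_mono (hUe ▸ interior_subset)
    have h4 : IsClosed (e '' K) := (hKc.image he.continuous).isClosed
    calc U ⊆ closure (U ∩ Set.range e) := h1
      _ = closure (e '' (e ⁻¹' U)) := by rw [h2]
      _ ⊆ closure (e '' K) := closure_mono h3
      _ = e '' K := h4.closure_eq
      _ ⊆ Set.range e := Set.image_subset_range _ _
  exact mem_nhds_iff.mpr ⟨U, hsub, hUo, hxU⟩

variable {X : Type*}

variable {X : Type*}

lemma move [MetricSpace X] [LocallyCompactSpace X] (hslh : StronglyLocallyHomogeneous X)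
    (D : Set X) (hD : Dense D) (T : Set X) (hT : T.Finite) (p : X) (hp : p ∉ T)
    (u : X → X) (hu : Continuous u) {ε : ℝ} (hε : 0 < ε) :
    ∃ g : X ≃ₜ X, g p ∈ D ∧ g p ∉ T ∧ (∀ t ∈ T, g t = t) ∧
      (∀ x, dist (g x) x ≤ ε) ∧ (∀ x, dist (g.symm x) x ≤ ε) ∧
      (∀ x, dist (u (g x)) (u x) ≤ ε) ∧ (∀ x, dist (u (g.symm x)) (u x) ≤ ε) := by
  obtain ⟨K, hKc, hKn⟩ := exists_compact_mem_nhds p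
  have huc : UniformContinuousOn u K :=
    hKc.uniformContinuousOn_of_continuous hu.continuousOn
  obtain ⟨δ, hδ, hδu⟩ := (Metric.uniformContinuousOn_iff.1 huc) ε hε
  obtain ⟨r0, hr0, hr0K⟩ := Metric.mem_nhds_iff.1 hKn
  set r : ℝ := min (min r0 (δ / 3)) (ε / 3) with hr_def
  have hr : 0 < r := lt_min (lt_min hr0 (by linarith)) (by linarith)
  have hrr0 : r ≤ r0 := le_trans (min_le_left _ _) (min_le_left _ _)
  have hrδ : 2 * r < δ := by
    have : r ≤ δ / 3 := le_trans (min_le_left _ _) (min_le_right _ _)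
    linarith
  have hrε : 2 * r ≤ ε := by
    have : r ≤ ε / 3 := min_le_right _ _
    linarith
  set U : Set X := Metric.ball p r ∩ Tᶜ with hU_def
  have hUo : IsOpen U := Metric.isOpen_ball.inter hT.isClosed.isOpen_compl
  have hpU : p ∈ U := ⟨Metric.mem_ball_self hr, hp⟩
  obtain ⟨V, hVo, hpV, hVU, hmove⟩ := hslh p U (hUo.mem_nhds hpU)
  obtain ⟨b, hbD, hbV⟩ := hD.exists_mem_open hVo ⟨p, hpV⟩
  obtain ⟨g, hgp, hgfix⟩ := hmove b hbV
  -- g maps U into U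
  have gU : ∀ x ∈ U, g x ∈ U := by
    intro x hx
    by_contra hgx
    have h1 : g (g x) = g x := hgfix _ hgx
    have h2 : g x = x := g.injective h1
    rw [h2] at hgx; exact hgx hx
  have gsU : ∀ x ∈ U, g.symm x ∈ U := by
    intro x hx
    by_contra hgx
    have h1 : g (g.symm x) = g.symm x := hgfix _ hgx
    rw [g.apply_symm_apply] at h1
    exact hgx (h1 ▸ hx)
  have hdistU : ∀ x ∈ U, ∀ y ∈ U, dist x y < 2 * r := by
    intro x hx y hy
    calc dist x y ≤ dist x p + dist p y := dist_triangle _ _ _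
      _ < r + r := add_lt_add (Metric.mem_ball.1 hx.1)
          (by rw [dist_comm]; exact Metric.mem_ball.1 hy.1)
      _ = 2 * r := by ring
  have hUK : U ⊆ K := fun x hx => hr0K (Metric.ball_subset_ball hrr0 hx.1)
  have key : ∀ (w : X → X), (∀ x ∈ U, w x ∈ U) → (∀ x ∉ U, w x = x) →
      (∀ x, dist (w x) x ≤ ε) ∧ (∀ x, dist (u (w x)) (u x) ≤ ε) := by
    intro w hwU hwfix
    constructor
    · intro x
      by_cases hx : x ∈ U
      · exact le_trans (le_of_lt (hdistU _ (hwU x hx) _ hx)) hrε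
      · rw [hwfix x hx, dist_self]; exact le_of_lt hε
    · intro x
      by_cases hx : x ∈ U
      · exact le_of_lt (hδu _ (hUK (hwU x hx)) _ (hUK hx)
          (lt_trans (hdistU _ (hwU x hx) _ hx) hrδ))
      · rw [hwfix x hx, dist_self]; exact le_of_lt hε
  obtain ⟨hg1, hg2⟩ := key g gU hgfix
  have hsfix : ∀ x ∉ U, g.symm x = x := by
    intro x hx
    have := hgfix x hx
    conv_lhs => rw [← this]
    exact g.symm_apply_apply x
  obtain ⟨hg3, hg4⟩ := key g.symm gsU hsfix
  exact ⟨g, hgp ▸ hbD, fun h => (hVU hbV).2 (hgp ▸ h),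
    fun t ht => hgfix t (fun hc => hc.2 ht), hg1, hg3, hg2, hg4⟩

variable {X : Type*}

lemma dense_image_homeo [TopologicalSpace X] (h : X ≃ₜ X) {A : Set X} (hA : Dense A) :
    Dense (h '' A) := by
  rw [dense_iff_closure_eq, ← Homeomorph.image_closure, hA.closure_eq, Set.image_univ,
    h.surjective.range_eq]

structure BFState (X : Type*) [TopologicalSpace X] (A B : Set X) where
  h : X ≃ₜ X
  P : Set (X × X)
  fin : P.Finite
  memA : ∀ q ∈ P, Prod.fst q ∈ A
  memB : ∀ q ∈ P, Prod.snd q ∈ B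
  maps : ∀ q ∈ P, h (Prod.fst q) = Prod.snd q

variable [MetricSpace X] [LocallyCompactSpace X]


lemma stepF (hslh : StronglyLocallyHomogeneous X) {A B : Set X} (hBd : Dense B)
    (s : BFState X A B) (a : X) (ha : a ∈ A) {ε : ℝ} (hε : 0 < ε) :
    ∃ s' : BFState X A B, s.P ⊆ s'.P ∧ (∃ b', (a, b') ∈ s'.P) ∧
      (∀ x, dist (s'.h x) (s.h x) ≤ ε) ∧ (∀ x, dist (s'.h.symm x) (s.h.symm x) ≤ ε) := by
  by_cases hdone : ∃ b', (a, b') ∈ s.P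
  · exact ⟨s, subset_rfl, hdone, fun x => by simp [le_of_lt hε],
      fun x => by simp [le_of_lt hε]⟩
  · have hT : (Prod.snd '' s.P).Finite := s.fin.image _
    have hp : s.h a ∉ Prod.snd '' s.P := by
      rintro ⟨q, hq, hq2⟩
      have := s.maps q hq
      have h1 : q.1 = a := s.h.injective (by rw [this, hq2])
      exact hdone ⟨q.2, by rwa [← h1]⟩
    obtain ⟨g, hgD, hgT, hgfix, hd1, hd2, hd3, hd4⟩ :=
      move hslh B hBd _ hT (s.h a) hp s.h.symm s.h.symm.continuous hε
    refine ⟨⟨s.h.trans g, insert (a, g (s.h a)) s.P, s.fin.insert _,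
      ?_, ?_, ?_⟩, Set.subset_insert _ _, ⟨g (s.h a), Set.mem_insert _ _⟩, ?_, ?_⟩
    · rintro q (rfl | hq)
      · exact ha
      · exact s.memA q hq
    · rintro q (rfl | hq)
      · exact hgD
      · exact s.memB q hq
    · rintro q (rfl | hq)
      · simp [Homeomorph.trans_apply]
      · simp only [Homeomorph.trans_apply]
        rw [s.maps q hq]
        exact hgfix _ ⟨q, hq, rfl⟩
    · intro x; simpa [Homeomorph.trans_apply] using hd1 (s.h x)
    · intro x
      simpa [Homeomorph.symm_trans_apply] using hd4 x

lemma stepB (hslh : StronglyLocallyHomogeneous X) {A B : Set X} (hAd : Dense A)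
    (s : BFState X A B) (b : X) (hb : b ∈ B) {ε : ℝ} (hε : 0 < ε) :
    ∃ s' : BFState X A B, s.P ⊆ s'.P ∧ (∃ a', (a', b) ∈ s'.P) ∧
      (∀ x, dist (s'.h x) (s.h x) ≤ ε) ∧ (∀ x, dist (s'.h.symm x) (s.h.symm x) ≤ ε) := by
  by_cases hdone : ∃ a', (a', b) ∈ s.P
  · exact ⟨s, subset_rfl, hdone, fun x => by simp [le_of_lt hε],
      fun x => by simp [le_of_lt hε]⟩
  · have hT : (Prod.snd '' s.P).Finite := s.fin.image _
    have hp : b ∉ Prod.snd '' s.P := by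
      rintro ⟨q, hq, hq2⟩
      exact hdone ⟨q.1, by rw [← hq2]; exact (Prod.mk.eta (p := q)) ▸ hq⟩
    obtain ⟨g, hgD, hgT, hgfix, hd1, hd2, hd3, hd4⟩ :=
      move hslh (s.h '' A) (dense_image_homeo s.h hAd) _ hT b hp
        s.h.symm s.h.symm.continuous hε
    obtain ⟨a, haA, hga⟩ := hgD
    have hfixsymm : ∀ t ∈ Prod.snd '' s.P, g.symm t = t := by
      intro t ht
      conv_lhs => rw [← hgfix t ht]
      exact g.symm_apply_apply t
    refine ⟨⟨s.h.trans g.symm, insert (a, b) s.P, s.fin.insert _, ?_, ?_, ?_⟩,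
      Set.subset_insert _ _, ⟨a, Set.mem_insert _ _⟩, ?_, ?_⟩
    · rintro q (rfl | hq)
      · exact haA
      · exact s.memA q hq
    · rintro q (rfl | hq)
      · exact hb
      · exact s.memB q hq
    · rintro q (rfl | hq)
      · simp only [Homeomorph.trans_apply]
        rw [hga]
        exact g.symm_apply_apply b
      · simp only [Homeomorph.trans_apply]
        rw [s.maps q hq]
        exact hfixsymm _ ⟨q, hq, rfl⟩
    · intro x; simpa [Homeomorph.trans_apply] using hd2 (s.h x)
    · intro x
      have := hd3 x
      simpa [Homeomorph.symm_trans_apply] using this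

lemma stepFull (hslh : StronglyLocallyHomogeneous X) {A B : Set X}
    (hAd : Dense A) (hBd : Dense B)
    (s : BFState X A B) (a b : X) (ha : a ∈ A) (hb : b ∈ B) {ε : ℝ} (hε : 0 < ε) :
    ∃ s' : BFState X A B, s.P ⊆ s'.P ∧ (∃ b', (a, b') ∈ s'.P) ∧ (∃ a', (a', b) ∈ s'.P) ∧
      (∀ x, dist (s'.h x) (s.h x) ≤ ε) ∧ (∀ x, dist (s'.h.symm x) (s.h.symm x) ≤ ε) := by
  obtain ⟨s1, hsub1, hmem1, hb1, hb1'⟩ := stepF hslh hBd s a ha (half_pos hε)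
  obtain ⟨s2, hsub2, hmem2, hb2, hb2'⟩ := stepB hslh hAd s1 b hb (half_pos hε)
  refine ⟨s2, hsub1.trans hsub2, ?_, hmem2, ?_, ?_⟩
  · obtain ⟨b', hb'⟩ := hmem1; exact ⟨b', hsub2 hb'⟩
  · intro x
    calc dist (s2.h x) (s.h x) ≤ dist (s2.h x) (s1.h x) + dist (s1.h x) (s.h x) :=
        dist_triangle _ _ _
      _ ≤ ε / 2 + ε / 2 := add_le_add (hb2 x) (hb1 x)
      _ = ε := add_halves ε
  · intro x
    calc dist (s2.h.symm x) (s.h.symm x)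
        ≤ dist (s2.h.symm x) (s1.h.symm x) + dist (s1.h.symm x) (s.h.symm x) :=
        dist_triangle _ _ _
      _ ≤ ε / 2 + ε / 2 := add_le_add (hb2' x) (hb1' x)
      _ = ε := add_halves ε

theorem main [CompleteSpace X] (hslh : StronglyLocallyHomogeneous X) {A B : Set X} (hAd : Dense A) (hBd : Dense B)
    (eA eB : ℕ → X) (hA : A = Set.range eA) (hB : B = Set.range eB) :
    ∃ f : X ≃ₜ X, f '' A = B := by
  -- the sequence of states
  have key : ∀ (n : ℕ) (s : BFState X A B), ∃ s' : BFState X A B,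
      s.P ⊆ s'.P ∧ (∃ b', (eA n, b') ∈ s'.P) ∧ (∃ a', (a', eB n) ∈ s'.P) ∧
      (∀ x, dist (s'.h x) (s.h x) ≤ (1/2 : ℝ) ^ n) ∧
      (∀ x, dist (s'.h.symm x) (s.h.symm x) ≤ (1/2 : ℝ) ^ n) := by
    intro n s
    exact stepFull hslh hAd hBd s (eA n) (eB n)
      (hA ▸ Set.mem_range_self n) (hB ▸ Set.mem_range_self n)
      (pow_pos (by norm_num) n)
  choose! step hsub hmemA hmemB hd hd' using key
  set S : ℕ → BFState X A B := fun n =>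
    Nat.rec ⟨Homeomorph.refl X, ∅, Set.finite_empty, by simp, by simp, by simp⟩
      (fun n s => step n s) n with hS
  have hSsucc : ∀ n, S (n + 1) = step n (S n) := fun n => rfl
  -- monotonicity of pair sets
  have hmono : ∀ m n, m ≤ n → (S m).P ⊆ (S n).P := by
    intro m n hmn
    induction n with
    | zero => rw [Nat.le_zero.1 hmn]
    | succ k ih =>
      rcases Nat.le_succ_iff.1 hmn with h | h
      · exact (ih h).trans (hSsucc k ▸ hsub k (S k))
      · rw [h]
  -- distance bounds between consecutive states
  have hstep : ∀ n x, dist ((S n).h x) ((S (n + 1)).h x) ≤ 1 * (1/2 : ℝ) ^ n := by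
    intro n x
    rw [one_mul, dist_comm, hSsucc n]
    exact hd n (S n) x
  have hstep' : ∀ n x, dist ((S n).h.symm x) ((S (n + 1)).h.symm x) ≤ 1 * (1/2 : ℝ) ^ n := by
    intro n x
    rw [one_mul, dist_comm, hSsucc n]
    exact hd' n (S n) x
  have hhalf : (1/2 : ℝ) < 1 := by norm_num
  -- limits
  have hex : ∀ x : X, ∃ y, Tendsto (fun n => (S n).h x) atTop (𝓝 y) :=
    fun x => cauchySeq_tendsto_of_complete
      (cauchySeq_of_le_geometric (1/2) 1 hhalf (fun n => hstep n x))
  have hex' : ∀ x : X, ∃ y, Tendsto (fun n => (S n).h.symm x) atTop (𝓝 y) :=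
    fun x => cauchySeq_tendsto_of_complete
      (cauchySeq_of_le_geometric (1/2) 1 hhalf (fun n => hstep' n x))
  choose F hF using hex
  choose G hG using hex'
  -- uniform bounds to the limit
  have hFb : ∀ n x, dist ((S n).h x) (F x) ≤ 1 * (1/2 : ℝ) ^ n / (1 - 1/2) :=
    fun n x => dist_le_of_le_geometric_of_tendsto (1/2) 1 hhalf (fun m => hstep m x) (hF x) n
  have hGb : ∀ n x, dist ((S n).h.symm x) (G x) ≤ 1 * (1/2 : ℝ) ^ n / (1 - 1/2) :=
    fun n x => dist_le_of_le_geometric_of_tendsto (1/2) 1 hhalf (fun m => hstep' m x) (hG x) n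
  -- the bound tends to zero
  have hbnd : Tendsto (fun n : ℕ => 1 * (1/2 : ℝ) ^ n / (1 - 1/2)) atTop (𝓝 0) := by
    have h0 : Tendsto (fun n : ℕ => (1/2 : ℝ) ^ n) atTop (𝓝 0) :=
      tendsto_pow_atTop_nhds_zero_of_lt_one (by norm_num) hhalf
    have heq : (fun n : ℕ => 1 * (1/2 : ℝ) ^ n / (1 - 1/2)) = fun n => ((1/2 : ℝ) ^ n) * 2 := by
      funext n; ring
    rw [heq]
    simpa using h0.mul_const (2 : ℝ)
  -- uniform convergence and continuity of the limits
  have hFu : TendstoUniformly (fun n x => (S n).h x) F atTop := by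
    rw [Metric.tendstoUniformly_iff]
    intro ε hε
    filter_upwards [hbnd.eventually_lt_const hε] with n hn x
    exact lt_of_le_of_lt (dist_comm ((S n).h x) (F x) ▸ hFb n x) hn
  have hGu : TendstoUniformly (fun n x => (S n).h.symm x) G atTop := by
    rw [Metric.tendstoUniformly_iff]
    intro ε hε
    filter_upwards [hbnd.eventually_lt_const hε] with n hn x
    exact lt_of_le_of_lt (dist_comm ((S n).h.symm x) (G x) ▸ hGb n x) hn
  have hFc : Continuous F := hFu.continuous (Frequently.of_forall fun n => (S n).h.continuous)
  have hGc : Continuous G := hGu.continuous (Frequently.of_forall fun n => (S n).h.symm.continuous)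
  -- G is inverse to F
  have hGF : ∀ x, G (F x) = x := by
    intro x
    apply eq_of_forall_dist_le
    intro ε hε
    obtain ⟨δ, hδ, hδc⟩ := Metric.continuous_iff.1 hGc (F x) (ε/2) (half_pos hε)
    obtain ⟨n, hn⟩ := (hbnd.eventually_lt_const (lt_min hδ (half_pos hε))).exists
    have e1 : dist ((S n).h x) (F x) < δ :=
      lt_of_le_of_lt (hFb n x) (lt_of_lt_of_le hn (min_le_left _ _))
    have e2 : dist (G ((S n).h x)) (G (F x)) < ε/2 := hδc _ e1
    have e3 : dist (G ((S n).h x)) x ≤ ε/2 := by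
      have h4 := hGb n ((S n).h x)
      rw [(S n).h.symm_apply_apply] at h4
      calc dist (G ((S n).h x)) x = dist x (G ((S n).h x)) := dist_comm _ _
        _ ≤ 1 * (1/2 : ℝ) ^ n / (1 - 1/2) := h4
        _ ≤ ε/2 := le_of_lt (lt_of_lt_of_le hn (min_le_right _ _))
    calc dist (G (F x)) x ≤ dist (G (F x)) (G ((S n).h x)) + dist (G ((S n).h x)) x :=
        dist_triangle _ _ _
      _ ≤ ε/2 + ε/2 := add_le_add (le_of_lt (dist_comm (G ((S n).h x)) (G (F x)) ▸ e2)) e3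
      _ = ε := add_halves ε
  have hFG : ∀ x, F (G x) = x := by
    intro x
    apply eq_of_forall_dist_le
    intro ε hε
    obtain ⟨δ, hδ, hδc⟩ := Metric.continuous_iff.1 hFc (G x) (ε/2) (half_pos hε)
    obtain ⟨n, hn⟩ := (hbnd.eventually_lt_const (lt_min hδ (half_pos hε))).exists
    have e1 : dist ((S n).h.symm x) (G x) < δ :=
      lt_of_le_of_lt (hGb n x) (lt_of_lt_of_le hn (min_le_left _ _))
    have e2 : dist (F ((S n).h.symm x)) (F (G x)) < ε/2 := hδc _ e1
    have e3 : dist (F ((S n).h.symm x)) x ≤ ε/2 := by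
      have h4 := hFb n ((S n).h.symm x)
      rw [(S n).h.apply_symm_apply] at h4
      calc dist (F ((S n).h.symm x)) x = dist x (F ((S n).h.symm x)) := dist_comm _ _
        _ ≤ 1 * (1/2 : ℝ) ^ n / (1 - 1/2) := h4
        _ ≤ ε/2 := le_of_lt (lt_of_lt_of_le hn (min_le_right _ _))
    calc dist (F (G x)) x ≤ dist (F (G x)) (F ((S n).h.symm x)) + dist (F ((S n).h.symm x)) x :=
        dist_triangle _ _ _
      _ ≤ ε/2 + ε/2 := add_le_add (le_of_lt (dist_comm (F ((S n).h.symm x)) (F (G x)) ▸ e2)) e3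
      _ = ε := add_halves ε
  -- matched pairs persist to the limit
  have hpers : ∀ n q, q ∈ (S n).P → F q.1 = q.2 := by
    intro n q hq
    have hev : ∀ m, n ≤ m → (S m).h q.1 = q.2 := fun m hm => (S m).maps q (hmono n m hm hq)
    have hconst : Tendsto (fun m => (S m).h q.1) atTop (𝓝 q.2) := by
      apply Tendsto.congr' _ tendsto_const_nhds
      filter_upwards [eventually_ge_atTop n] with m hm
      exact (hev m hm).symm
    exact tendsto_nhds_unique (hF q.1) hconst
  refine ⟨⟨⟨F, G, hGF, hFG⟩, hFc, hGc⟩, ?_⟩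
  apply Set.Subset.antisymm
  · rintro _ ⟨a, haA, rfl⟩
    rw [hA] at haA
    obtain ⟨k, rfl⟩ := haA
    obtain ⟨b', hb'⟩ := hmemA k (S k)
    have hb'mem : (eA k, b') ∈ (S (k+1)).P := hSsucc k ▸ hb'
    have hfe : F (eA k) = b' := hpers (k+1) _ hb'mem
    show F (eA k) ∈ B
    rw [hfe]
    exact (S (k+1)).memB _ hb'mem
  · intro b hbB
    rw [hB] at hbB
    obtain ⟨k, rfl⟩ := hbB
    obtain ⟨a', ha'⟩ := hmemB k (S k)
    have ha'mem : (a', eB k) ∈ (S (k+1)).P := hSsucc k ▸ ha'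
    exact ⟨a', (S (k+1)).memA _ ha'mem, hpers (k+1) _ ha'mem⟩

end BennettProof

/-- Bennett's theorem: a metrizable locally compact strongly locally homogeneous
space is countable dense homogeneous. -/
theorem stmt3 {X : Type*} [TopologicalSpace X] [TopologicalSpace.MetrizableSpace X]
    [LocallyCompactSpace X] (hslh : StronglyLocallyHomogeneous X)
    (A B : Set X) (hAc : A.Countable) (hBc : B.Countable)
    (hAd : Dense A) (hBd : Dense B) :
    ∃ f : X ≃ₜ X, f '' A = B := by
  rcases isEmpty_or_nonempty X with hX | hX
  · refine ⟨Homeomorph.refl X, ?_⟩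
    have hA' : A = ∅ := Set.eq_empty_of_isEmpty A
    have hB' : B = ∅ := Set.eq_empty_of_isEmpty B
    simp [hA', hB']
  · haveI hpol : PolishSpace X := by
      letI m : MetricSpace X := TopologicalSpace.metrizableSpaceMetric X
      haveI hsep : TopologicalSpace.SeparableSpace X := ⟨⟨A, hAc, hAd⟩⟩
      haveI : SecondCountableTopology X := UniformSpace.secondCountable_of_separable X
      haveI hLC : LocallyCompactSpace X := by assumption
      haveI : TopologicalSpace.SeparableSpace (UniformSpace.Completion X) :=
        UniformSpace.Completion.denseRange_coe.separableSpace
          (UniformSpace.Completion.continuous_coe X)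
      haveI : PolishSpace (UniformSpace.Completion X) := inferInstance
      have he : Topology.IsEmbedding ((↑) : X → UniformSpace.Completion X) :=
        (UniformSpace.Completion.isUniformEmbedding_coe X).isEmbedding
      have hopen : IsOpen (Set.range ((↑) : X → UniformSpace.Completion X)) :=
        BennettProof.isOpen_range_of_dense he UniformSpace.Completion.denseRange_coe
      haveI : PolishSpace (Set.range ((↑) : X → UniformSpace.Completion X)) :=
        hopen.polishSpace
      exact (Topology.IsEmbedding.toHomeomorph he).isClosedEmbedding.polishSpace
    letI up := TopologicalSpace.upgradeIsCompletelyMetrizable X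
    haveI hLC2 : LocallyCompactSpace X := by assumption
    obtain ⟨eA, hA⟩ := hAc.exists_eq_range (hAd.nonempty)
    obtain ⟨eB, hB⟩ := hBc.exists_eq_range (hBd.nonempty)
    exact BennettProof.main hslh hAd hBd eA eB hA hB
end

section
/- Let X be a metrizable, locally compact, strongly locally homogeneous space with a metric compactification X̄. If A ⊆ X is countable and dense in X and B ⊆ X has empty interior, then there exists a homeomorphism f : X̄ → X̄ with f(B) ∩ A = ∅ and f equal to the identity on X̄ − X. -/
open Set Metric Filter Topology


lemma equiv_moved {Xb : Type*} {f : Xb ≃ Xb} {U : Set Xb} (hf : ∀ z ∉ U, f z = z) :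
    ∀ z, f z ≠ z → z ∈ U ∧ f z ∈ U := by
  intro z hz
  have h1 : z ∈ U := by by_contra h; exact hz (hf z h)
  refine ⟨h1, ?_⟩
  by_contra h
  exact hz (f.injective (hf _ h))

lemma equiv_fix_symm {Xb : Type*} {f : Xb ≃ Xb} {U : Set Xb} (hf : ∀ z ∉ U, f z = z) :
    ∀ z ∉ U, f.symm z = z := by
  intro z hz
  by_contra hne
  have h2 : f (f.symm z) ≠ f.symm z := by
    rw [f.apply_symm_apply]; exact fun e => hne e.symm
  have h3 := (equiv_moved hf _ h2).2
  rw [f.apply_symm_apply] at h3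
  exact hz h3

lemma extend_homeo {Xb : Type*} [MetricSpace Xb] (X : Set Xb) (hXopen : IsOpen X)
    (K : Set Xb) (hK : IsCompact K) (hKX : K ⊆ X)
    (f : ↥X ≃ₜ ↥X) (hfix : ∀ z : ↥X, (z : Xb) ∉ K → f z = z) :
    ∃ Φ : Xb ≃ₜ Xb, (∀ z : ↥X, Φ z = ↑(f z)) ∧ (∀ z ∉ X, Φ z = z) := by
  classical
  set F : Xb → Xb := fun z => if h : z ∈ X then ↑(f ⟨z, h⟩) else z with hF
  set Fi : Xb → Xb := fun z => if h : z ∈ X then ↑(f.symm ⟨z, h⟩) else z with hFi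
  have hFmem : ∀ z (h : z ∈ X), F z = ↑(f ⟨z, h⟩) := fun z h => dif_pos h
  have hFimem : ∀ z (h : z ∈ X), Fi z = ↑(f.symm ⟨z, h⟩) := fun z h => dif_pos h
  have hFnot : ∀ z ∉ X, F z = z := fun z h => dif_neg h
  have hFinot : ∀ z ∉ X, Fi z = z := fun z h => dif_neg h
  have hleft : ∀ z, Fi (F z) = z := by
    intro z
    by_cases h : z ∈ X
    · rw [hFmem z h, hFimem _ (f ⟨z, h⟩).2]
      simp
    · rw [hFnot z h, hFinot z h]
  have hright : ∀ z, F (Fi z) = z := by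
    intro z
    by_cases h : z ∈ X
    · rw [hFimem z h, hFmem _ (f.symm ⟨z, h⟩).2]
      simp
    · rw [hFinot z h, hFnot z h]
  have hcont : ∀ (g : Xb → Xb) (gs : ↥X → ↥X), Continuous gs →
      (∀ z (h : z ∈ X), g z = ↑(gs ⟨z, h⟩)) → (∀ z ∉ X, g z = z) →
      (∀ z : ↥X, (z : Xb) ∉ K → gs z = z) → Continuous g := by
    intro g gs hgs hgmem hgnot hgfix
    rw [continuous_iff_continuousAt]
    intro z
    by_cases h : z ∈ X
    · have hOn : ContinuousOn g X := by
        rw [continuousOn_iff_continuous_restrict]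
        have : X.restrict g = fun w : ↥X => (↑(gs w) : Xb) := by
          funext w
          simp [Set.restrict, hgmem _ w.2]
        rw [show X.domRestrict g = _ from this]
        exact continuous_subtype_val.comp hgs
      exact hOn.continuousAt (hXopen.mem_nhds h)
    · have hK' : z ∈ Kᶜ := fun hz => h (hKX hz)
      have hOn : ContinuousOn g Kᶜ := by
        apply ContinuousOn.congr continuousOn_id
        intro w hw
        by_cases h2 : w ∈ X
        · rw [hgmem w h2, hgfix ⟨w, h2⟩ hw]; rfl
        · exact hgnot w h2
      exact hOn.continuousAt (hK.isClosed.isOpen_compl.mem_nhds hK')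
  have hfixsymm : ∀ z : ↥X, (z : Xb) ∉ K → f.symm z = z := by
    intro z hz
    have : ∀ w : ↥X, w ∉ (Subtype.val ⁻¹' K : Set ↥X) → f.toEquiv w = w := by
      intro w hw; exact hfix w hw
    exact equiv_fix_symm this z hz
  refine ⟨⟨⟨F, Fi, hleft, hright⟩,
    hcont F (⇑f) f.continuous hFmem hFnot hfix,
    hcont Fi (⇑f.symm) f.symm.continuous hFimem hFinot hfixsymm⟩, ?_, ?_⟩
  · intro z
    show F ↑z = ↑(f z)
    rw [hFmem _ z.2]
  · intro z h
    exact hFnot z h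

lemma small_move {Xb : Type*} [MetricSpace Xb] (X : Set Xb) (hXopen : IsOpen X)
    (hlc : LocallyCompactSpace ↥X) (hslh : StronglyLocallyHomogeneous ↥X)
    (B : Set Xb) (hBint : interior (Subtype.val ⁻¹' B : Set ↥X) = ∅)
    (x : Xb) (hx : x ∈ X) (P : Set Xb) (hPfin : P.Finite) (hxP : x ∉ P)
    (ε : ℝ) (hε : 0 < ε) :
    ∃ Φ : Xb ≃ₜ Xb, Φ x ∉ B ∧ (∀ z ∉ X, Φ z = z) ∧ (∀ p ∈ P, Φ p = p) ∧
      (∀ z, dist (Φ z) z ≤ ε) ∧ (∀ z, dist (Φ.symm z) z ≤ ε) := by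
  classical
  set xt : ↥X := ⟨x, hx⟩ with hxt
  obtain ⟨Kt, hKtc, hKtn⟩ := exists_compact_mem_nhds xt
  set UX : Set ↥X := (Subtype.val ⁻¹' (ball x (ε / 2) ∩ Pᶜ)) ∩ interior Kt with hUX
  have hUXopen : IsOpen UX := by
    apply IsOpen.inter _ isOpen_interior
    exact (isOpen_ball.inter hPfin.isClosed.isOpen_compl).preimage continuous_subtype_val
  have hxUX : xt ∈ UX := by
    refine ⟨⟨mem_ball_self (by linarith), hxP⟩, mem_interior_iff_mem_nhds.2 hKtn⟩
  obtain ⟨V, hVopen, hxV, hVU, hmove⟩ := hslh xt UX (hUXopen.mem_nhds hxUX)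
  have hy : ∃ y ∈ V, y ∉ (Subtype.val ⁻¹' B : Set ↥X) := by
    by_contra h
    push_neg at h
    have : V ⊆ interior (Subtype.val ⁻¹' B : Set ↥X) :=
      hVopen.subset_interior_iff.2 h
    rw [hBint] at this
    exact this hxV
  obtain ⟨y, hyV, hyB⟩ := hy
  obtain ⟨f, hfx, hffix'⟩ := hmove y hyV
  have hffix : ∀ z : ↥X, z ∉ UX → f z = z := hffix'
  -- extension
  set K : Set Xb := Subtype.val '' Kt with hKdef
  have hKc : IsCompact K := hKtc.image continuous_subtype_val
  have hKX : K ⊆ X := by rintro _ ⟨w, _, rfl⟩; exact w.2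
  have hfixK : ∀ z : ↥X, (z : Xb) ∉ K → f z = z := by
    intro z hz
    apply hffix
    intro hzU
    exact hz ⟨z, interior_subset hzU.2, rfl⟩
  obtain ⟨Φ, hΦcoe, hΦfix⟩ := extend_homeo X hXopen K hKc hKX f hfixK
  -- moved points are in the image of UX
  have hmovedf : ∀ z : ↥X, f z ≠ z → z ∈ UX ∧ f z ∈ UX := by
    intro z hz
    exact equiv_moved (f := f.toEquiv) (fun w hw => hffix w hw) z hz
  have hmoved : ∀ z : Xb, Φ z ≠ z →
      z ∈ ball x (ε / 2) ∩ Pᶜ ∧ Φ z ∈ ball x (ε / 2) ∩ Pᶜ := by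
    intro z hz
    by_cases h : z ∈ X
    · have hz' : f ⟨z, h⟩ ≠ ⟨z, h⟩ := by
        intro e
        exact hz (by rw [hΦcoe ⟨z, h⟩, e])
      obtain ⟨h1, h2⟩ := hmovedf ⟨z, h⟩ hz'
      refine ⟨h1.1, ?_⟩
      rw [hΦcoe ⟨z, h⟩]
      exact h2.1
    · exact absurd (hΦfix z h) hz
  refine ⟨Φ, ?_, hΦfix, ?_, ?_, ?_⟩
  · have hc : Φ x = ↑(f xt) := hΦcoe xt
    rw [hc, hfx]
    exact hyB
  · intro p hp
    by_contra h
    exact (hmoved p h).1.2 hp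
  · intro z
    by_cases h : Φ z = z
    · simp [h, hε.le]
    · obtain ⟨h1, h2⟩ := hmoved z h
      have d1 : dist (Φ z) x < ε / 2 := mem_ball.1 h2.1
      have d2 : dist z x < ε / 2 := mem_ball.1 h1.1
      calc dist (Φ z) z ≤ dist (Φ z) x + dist x z := dist_triangle _ _ _
        _ ≤ ε / 2 + ε / 2 := by rw [dist_comm x z]; linarith
        _ = ε := by ring
  · intro z
    by_cases h : Φ.symm z = z
    · simp [h, hε.le]
    · have hm : Φ (Φ.symm z) ≠ Φ.symm z := by
        rw [Φ.apply_symm_apply]; exact fun e => h e.symm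
      obtain ⟨h1, h2⟩ := hmoved _ hm
      rw [Φ.apply_symm_apply] at h2
      have d1 : dist (Φ.symm z) x < ε / 2 := mem_ball.1 h1.1
      have d2 : dist z x < ε / 2 := mem_ball.1 h2.1
      calc dist (Φ.symm z) z ≤ dist (Φ.symm z) x + dist x z := dist_triangle _ _ _
        _ ≤ ε / 2 + ε / 2 := by rw [dist_comm x z]; linarith
        _ = ε := by ring

lemma step_lemma {Xb : Type*} [MetricSpace Xb] [CompactSpace Xb] (X : Set Xb)
    (hXopen : IsOpen X) (hlc : LocallyCompactSpace ↥X)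
    (hslh : StronglyLocallyHomogeneous ↥X)
    (B : Set Xb) (hB : B ⊆ X)
    (hBint : interior (Subtype.val ⁻¹' B : Set ↥X) = ∅)
    (u : ℕ → Xb) (n : ℕ) (g : Xb ≃ₜ Xb) (hgfix : ∀ z ∉ X, g z = z)
    (hginv : ∀ i < n, g (u i) ∉ B) :
    ∃ g' : Xb ≃ₜ Xb, (∀ z ∉ X, g' z = z) ∧ (∀ i < n, g' (u i) = g (u i)) ∧
      g' (u n) ∉ B ∧ (∀ z, dist (g' z) (g z) ≤ (1/2 : ℝ)^n) ∧
      (∀ z, dist (g'.symm z) (g.symm z) ≤ (1/2 : ℝ)^n) := by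
  classical
  by_cases hxB : g (u n) ∈ B
  · set x := g (u n) with hxdef
    have hxX : x ∈ X := hB hxB
    set P : Set Xb := (fun i => g (u i)) '' (Set.Iio n) with hPdef
    have hPfin : P.Finite := (Set.finite_Iio n).image _
    have hxP : x ∉ P := by
      rintro ⟨i, hi, he⟩
      simp only at he
      exact hginv i hi (he ▸ hxB)
    have huc : UniformContinuous ⇑g.symm :=
      CompactSpace.uniformContinuous_of_continuous g.symm.continuous
    obtain ⟨δ, hδ, hδ2⟩ := Metric.uniformContinuous_iff.1 huc ((1/2 : ℝ)^n) (by positivity)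
    set ε := min ((1/2 : ℝ)^n) (δ/2) with hεdef
    have hεpos : 0 < ε := lt_min (by positivity) (by linarith)
    obtain ⟨Φ, hΦB, hΦfix, hΦP, hΦd, hΦsd⟩ :=
      small_move X hXopen hlc hslh B hBint x hxX P hPfin hxP ε hεpos
    refine ⟨g.trans Φ, ?_, ?_, ?_, ?_, ?_⟩
    · intro z hz
      show Φ (g z) = z
      rw [hgfix z hz, hΦfix z hz]
    · intro i hi
      show Φ (g (u i)) = g (u i)
      exact hΦP _ ⟨i, hi, rfl⟩
    · show Φ (g (u n)) ∉ B
      exact hΦB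
    · intro z
      show dist (Φ (g z)) (g z) ≤ (1/2 : ℝ)^n
      exact (hΦd (g z)).trans (min_le_left _ _)
    · intro z
      show dist (g.symm (Φ.symm z)) (g.symm z) ≤ (1/2 : ℝ)^n
      have h1 : dist (Φ.symm z) z < δ :=
        lt_of_le_of_lt ((hΦsd z).trans (min_le_right _ _)) (by linarith)
      exact (hδ2 h1).le
  · exact ⟨g, hgfix, fun _ _ => rfl, hxB,
      fun z => by simp, fun z => by simp [pow_nonneg]⟩

/-- A set `B ⊆ X` with empty interior (in `X`) can be moved off a countable dense
set `A ⊆ X` by a homeomorphism of a metric compactification `X̄` fixing `X̄ − X`. -/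
theorem stmt4 {Xb : Type*} [MetricSpace Xb] [CompactSpace Xb] (X : Set Xb)
    (hXopen : IsOpen X) (hXdense : Dense X)
    (hlc : LocallyCompactSpace ↥X)
    (hslh : StronglyLocallyHomogeneous ↥X)
    (A B : Set Xb) (hA : A ⊆ X) (hB : B ⊆ X)
    (hAc : A.Countable) (hAd : Dense A)
    (hBint : interior (Subtype.val ⁻¹' B : Set ↥X) = ∅) :
    ∃ f : Xb ≃ₜ Xb, f '' B ∩ A = ∅ ∧ ∀ z ∉ X, f z = z := by
  classical
  rcases A.eq_empty_or_nonempty with hAe | hAne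
  · exact ⟨Homeomorph.refl Xb, by simp [hAe], fun z _ => rfl⟩
  obtain ⟨u, huA⟩ := hAc.exists_eq_range hAne
  -- choice-based step function
  have hstep : ∀ (n : ℕ) (g : Xb ≃ₜ Xb), ∃ g' : Xb ≃ₜ Xb,
      ((∀ z ∉ X, g z = z) ∧ ∀ i < n, g (u i) ∉ B) →
      ((∀ z ∉ X, g' z = z) ∧ (∀ i < n, g' (u i) = g (u i)) ∧
        g' (u n) ∉ B ∧ (∀ z, dist (g' z) (g z) ≤ (1/2 : ℝ)^n) ∧
        (∀ z, dist (g'.symm z) (g.symm z) ≤ (1/2 : ℝ)^n)) := by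
    intro n g
    by_cases h : (∀ z ∉ X, g z = z) ∧ ∀ i < n, g (u i) ∉ B
    · obtain ⟨g', hg'⟩ := step_lemma X hXopen hlc hslh B hB hBint u n g h.1 h.2
      exact ⟨g', fun _ => hg'⟩
    · exact ⟨g, fun hc => absurd hc h⟩
  choose nextf hnextf using hstep
  let gg : ℕ → Xb ≃ₜ Xb := fun n => Nat.rec (Homeomorph.refl Xb) nextf n
  have hggs : ∀ n, gg (n + 1) = nextf n (gg n) := fun n => rfl
  have hInv : ∀ n, (∀ z ∉ X, gg n z = z) ∧ ∀ i < n, gg n (u i) ∉ B := by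
    intro n
    induction n with
    | zero => exact ⟨fun z _ => rfl, fun i hi => absurd hi (Nat.not_lt_zero i)⟩
    | succ n ih =>
      have h := hnextf n (gg n) ih
      refine ⟨by rw [hggs]; exact h.1, ?_⟩
      intro i hi
      rcases Nat.lt_succ_iff_lt_or_eq.1 hi with h' | h'
      · rw [hggs, h.2.1 i h']
        exact ih.2 i h'
      · subst h'
        rw [hggs]
        exact h.2.2.1
  have hs : ∀ n, (∀ i < n, gg (n+1) (u i) = gg n (u i)) ∧
      gg (n+1) (u n) ∉ B ∧ (∀ z, dist (gg (n+1) z) (gg n z) ≤ (1/2 : ℝ)^n) ∧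
      (∀ z, dist ((gg (n+1)).symm z) ((gg n).symm z) ≤ (1/2 : ℝ)^n) := by
    intro n
    have h := hnextf n (gg n) (hInv n)
    exact ⟨by rw [hggs]; exact h.2.1, by rw [hggs]; exact h.2.2.1,
      by rw [hggs]; exact h.2.2.2.1, by rw [hggs]; exact h.2.2.2.2⟩
  -- eventual constancy
  have hconst : ∀ i n, i < n → gg n (u i) = gg (i+1) (u i) := by
    intro i n
    induction n with
    | zero => omega
    | succ n ih =>
      intro hin
      rcases Nat.lt_succ_iff_lt_or_eq.1 hin with h | h
      · rw [(hs n).1 i h, ih h]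
      · subst h; rfl
  -- Cauchy sequences in C(Xb, Xb)
  let FF : ℕ → C(Xb, Xb) := fun n => ⟨gg n, (gg n).continuous⟩
  let SS : ℕ → C(Xb, Xb) := fun n => ⟨(gg n).symm, (gg n).symm.continuous⟩
  have hFd : ∀ n, dist (FF n) (FF (n+1)) ≤ 1 * (1/2 : ℝ)^n := by
    intro n
    rw [one_mul, ContinuousMap.dist_le (by positivity)]
    intro z
    rw [dist_comm]
    exact (hs n).2.2.1 z
  have hSd : ∀ n, dist (SS n) (SS (n+1)) ≤ 1 * (1/2 : ℝ)^n := by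
    intro n
    rw [one_mul, ContinuousMap.dist_le (by positivity)]
    intro z
    rw [dist_comm]
    exact (hs n).2.2.2 z
  obtain ⟨G, hG⟩ := cauchySeq_tendsto_of_complete
    (cauchySeq_of_le_geometric (1/2) 1 (by norm_num) hFd)
  obtain ⟨H, hH⟩ := cauchySeq_tendsto_of_complete
    (cauchySeq_of_le_geometric (1/2) 1 (by norm_num) hSd)
  have hGd : Tendsto (fun n => dist (FF n) G) atTop (𝓝 0) :=
    tendsto_iff_dist_tendsto_zero.1 hG
  have hHd : Tendsto (fun n => dist (SS n) H) atTop (𝓝 0) :=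
    tendsto_iff_dist_tendsto_zero.1 hH
  have hGpt : ∀ z, Tendsto (fun n => gg n z) atTop (𝓝 (G z)) := by
    intro z
    rw [tendsto_iff_dist_tendsto_zero]
    exact squeeze_zero (fun n => dist_nonneg)
      (fun n => ContinuousMap.dist_apply_le_dist (f := FF n) (g := G) z) hGd
  have hHpt : ∀ z, Tendsto (fun n => (gg n).symm z) atTop (𝓝 (H z)) := by
    intro z
    rw [tendsto_iff_dist_tendsto_zero]
    exact squeeze_zero (fun n => dist_nonneg)
      (fun n => ContinuousMap.dist_apply_le_dist (f := SS n) (g := H) z) hHd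
  -- inverse relations
  have hGH : ∀ z, G (H z) = z := by
    intro z
    have t1 : Tendsto (fun n => G ((gg n).symm z)) atTop (𝓝 (G (H z))) :=
      (G.continuous.tendsto (H z)).comp (hHpt z)
    have t2 : Tendsto (fun n => G ((gg n).symm z)) atTop (𝓝 z) := by
      rw [tendsto_iff_dist_tendsto_zero]
      apply squeeze_zero (fun n => dist_nonneg) (fun n => ?_)
        (by simpa [dist_comm] using hGd)
      calc dist (G ((gg n).symm z)) z
          = dist (G ((gg n).symm z)) (FF n ((gg n).symm z)) := by
            have : FF n ((gg n).symm z) = z := (gg n).apply_symm_apply z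
            rw [this]
        _ ≤ dist G (FF n) := ContinuousMap.dist_apply_le_dist _
    exact tendsto_nhds_unique t1 t2
  have hHG : ∀ z, H (G z) = z := by
    intro z
    have t1 : Tendsto (fun n => H (gg n z)) atTop (𝓝 (H (G z))) :=
      (H.continuous.tendsto (G z)).comp (hGpt z)
    have t2 : Tendsto (fun n => H (gg n z)) atTop (𝓝 z) := by
      rw [tendsto_iff_dist_tendsto_zero]
      apply squeeze_zero (fun n => dist_nonneg) (fun n => ?_)
        (by simpa [dist_comm] using hHd)
      calc dist (H (gg n z)) z
          = dist (H (gg n z)) (SS n (gg n z)) := by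
            have : SS n (gg n z) = z := (gg n).symm_apply_apply z
            rw [this]
        _ ≤ dist H (SS n) := ContinuousMap.dist_apply_le_dist _
    exact tendsto_nhds_unique t1 t2
  let GH : Xb ≃ₜ Xb := ⟨⟨⇑G, ⇑H, hHG, hGH⟩, G.continuous, H.continuous⟩
  have hGHapp : ∀ z, GH z = G z := fun _ => rfl
  -- G fixes complement of X
  have hGfixc : ∀ z ∉ X, G z = z := by
    intro z hz
    have hcz : (fun n => gg n z) = fun _ => z := funext fun n => (hInv n).1 z hz
    exact tendsto_nhds_unique (hGpt z) (hcz ▸ tendsto_const_nhds)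
  -- G moves u i off B
  have hGu : ∀ i, G (u i) ∉ B := by
    intro i
    have t2 : Tendsto (fun n => gg n (u i)) atTop (𝓝 (gg (i+1) (u i))) := by
      apply Tendsto.congr' _ tendsto_const_nhds
      filter_upwards [eventually_ge_atTop (i+1)] with n hn
      exact (hconst i n hn).symm
    have he : G (u i) = gg (i+1) (u i) := tendsto_nhds_unique (hGpt (u i)) t2
    rw [he]
    exact (hInv (i+1)).2 i (Nat.lt_succ_self i)
  refine ⟨GH.symm, ?_, ?_⟩
  · rw [Set.eq_empty_iff_forall_notMem]
    rintro w ⟨⟨b, hbB, rfl⟩, hwA⟩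
    rw [huA] at hwA
    obtain ⟨i, hi⟩ := hwA
    have hib : G (u i) = b := by
      rw [hi]
      exact GH.apply_symm_apply b
    exact hGu i (hib ▸ hbB)
  · intro z hz
    have h1 : GH z = z := hGfixc z hz
    calc GH.symm z = GH.symm (GH z) := by rw [h1]
      _ = z := GH.symm_apply_apply z
end

section
/- Let X be a compact Hausdorff space with its unique compatible uniform structure 𝔘, and let ∼ be an equivalence relation on X with closed classes such that for every entourage u ∈ 𝔘 only finitely many equivalence classes fail to be u-small. Then the quotient space X/∼ is Hausdorff. -/
open Topology


/-- A topologically quasiconvex equivalence relation (closed classes, only finitely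
many classes fail to be `u`-small for each entourage `u`) on a compact Hausdorff
space has Hausdorff quotient. -/
theorem stmt6 {X : Type*} [UniformSpace X] [CompactSpace X] [T2Space X]
    (s : Setoid X)
    (hcl : ∀ x : X, IsClosed {y | s.r y x})
    (hfin : ∀ u ∈ uniformity X,
      {c : Set X | (∃ x, c = {y | s.r x y}) ∧ ¬ c ×ˢ c ⊆ u}.Finite) :
    T2Space (Quotient s) := by
  -- every class is closed
  have hclass : ∀ x : X, IsClosed {y | s.r x y} := by
    intro x
    have : {y | s.r x y} = {y | s.r y x} := by
      ext y; exact ⟨s.symm, s.symm⟩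
    rw [this]; exact hcl x
  -- Step 1: the relation is closed in X × X
  have hR : IsClosed {p : X × X | s.r p.1 p.2} := by
    rw [← isOpen_compl_iff]
    rw [isOpen_iff_mem_nhds]
    rintro ⟨x, y⟩ hxy
    simp only [Set.mem_compl_iff, Set.mem_setOf_eq] at hxy
    have hne : x ≠ y := fun h => hxy (h ▸ s.refl x)
    obtain ⟨u, hu, hxyu⟩ : ∃ u ∈ uniformity X, (x, y) ∉ u := by
      by_contra h
      push_neg at h
      exact hne (eq_of_uniformity fun hu => h _ hu)
    obtain ⟨v, hv, hvsymm, hvu⟩ := comp_comp_symm_mem_uniformity_sets hu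
    -- the finitely many big classes
    set B := {c : Set X | (∃ x, c = {y | s.r x y}) ∧ ¬ c ×ˢ c ⊆ v} with hB
    have hBfin : B.Finite := hfin v hv
    set F := ⋃ c ∈ B, c ×ˢ c with hF
    have hFclosed : IsClosed F := by
      refine Set.Finite.isClosed_biUnion hBfin ?_
      rintro c ⟨⟨x₀, rfl⟩, -⟩
      exact (hclass x₀).prod (hclass x₀)
    have hxyF : (x, y) ∉ F := by
      simp only [hF, Set.mem_iUnion]
      rintro ⟨c, ⟨⟨x₀, rfl⟩, -⟩, hx, hy⟩
      exact hxy (s.trans (s.symm hx) hy)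
    -- the neighborhood
    have hN : (UniformSpace.ball x v ×ˢ UniformSpace.ball y v) ∩ Fᶜ ∈ 𝓝 (x, y) := by
      refine Filter.inter_mem ?_ (hFclosed.isOpen_compl.mem_nhds hxyF)
      exact prod_mem_nhds (UniformSpace.ball_mem_nhds x hv)
        (UniformSpace.ball_mem_nhds y hv)
    refine Filter.mem_of_superset hN ?_
    rintro ⟨a, b⟩ ⟨⟨ha, hb⟩, hFc⟩ hab
    simp only [Set.mem_setOf_eq] at hab
    set c := {z | s.r a z} with hc
    have hcB : c ∉ B := by
      intro hcBmem
      exact hFc (Set.mem_biUnion hcBmem ⟨s.refl a, hab⟩)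
    have hcsmall : c ×ˢ c ⊆ v := by
      by_contra h
      exact hcB ⟨⟨a, rfl⟩, h⟩
    have habv : (a, b) ∈ v := hcsmall ⟨s.refl a, hab⟩
    have : (x, y) ∈ SetRel.comp (SetRel.comp v v) v := ⟨b, ⟨a, ha, habv⟩, hvsymm.symm _ _ hb⟩
    exact hxyu (hvu this)
  -- Step 2: the quotient map is a closed map
  have hπclosed : IsClosedMap (Quotient.mk s) := by
    intro C hC
    rw [← isQuotientMap_quotient_mk'.isClosed_preimage]
    show IsClosed (Quotient.mk s ⁻¹' (Quotient.mk s '' C))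
    have heq : Quotient.mk s ⁻¹' (Quotient.mk s '' C) =
        Prod.fst '' ({p : X × X | s.r p.1 p.2} ∩ Set.univ ×ˢ C) := by
      ext z
      simp only [Set.mem_preimage, Set.mem_image, Set.mem_inter_iff, Set.mem_setOf_eq,
        Set.mem_prod, Set.mem_univ, true_and, Prod.exists]
      constructor
      · rintro ⟨w, hw, hzw⟩
        exact ⟨z, w, ⟨Quotient.exact hzw.symm, hw⟩, rfl⟩
      · rintro ⟨p, q, ⟨hpq, hq⟩, rfl⟩
        exact ⟨q, hq, (Quotient.sound hpq).symm⟩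
    rw [heq]
    have hcpt : IsCompact ({p : X × X | s.r p.1 p.2} ∩ Set.univ ×ˢ C) :=
      (hR.inter (isClosed_univ.prod hC)).isCompact
    exact (hcpt.image continuous_fst).isClosed
  -- Step 3: conclude T2
  constructor
  intro a b hab
  obtain ⟨x, rfl⟩ := Quotient.exists_rep a
  obtain ⟨y, rfl⟩ := Quotient.exists_rep b
  have hAB : SeparatedNhds {z | s.r z x} {z | s.r z y} := by
    apply SeparatedNhds.of_isCompact_isCompact_isClosed (hcl x).isCompact (hcl y).isCompact (hcl y)
    rw [Set.disjoint_left]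
    intro z hzx hzy
    exact hab (Quotient.sound (s.trans (s.symm hzx) hzy))
  obtain ⟨U, V, hUopen, hVopen, hAU, hBV, hUV⟩ := hAB
  refine ⟨(Quotient.mk s '' Uᶜ)ᶜ, (Quotient.mk s '' Vᶜ)ᶜ, ?_, ?_, ?_, ?_, ?_⟩
  · exact (hπclosed _ hUopen.isClosed_compl).isOpen_compl
  · exact (hπclosed _ hVopen.isClosed_compl).isOpen_compl
  · rintro ⟨z, hz, hzx⟩
    exact hz (hAU (Quotient.exact hzx))
  · rintro ⟨z, hz, hzy⟩
    exact hz (hBV (Quotient.exact hzy))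
  · rw [Set.disjoint_left]
    rintro c hcU hcV
    obtain ⟨z, rfl⟩ := Quotient.exists_rep c
    have hzU : z ∈ U := by
      by_contra h
      exact hcU ⟨z, h, rfl⟩
    have hzV : z ∈ V := by
      by_contra h
      exact hcV ⟨z, h, rfl⟩
    exact Set.disjoint_left.mp hUV hzU hzV
end

section
/- Let f : X → Y be a continuous surjection between compact Hausdorff spaces. For A ⊆ Y define the equivalence relation ∼_A on X whose nontrivial classes are the fibers f⁻¹(q) for q ∉ A, and set X_A = X/∼_A. Then the following are equivalent: (1) the relation whose classes are all fibers of f is topologically quasiconvex; (2) X_A is Hausdorff for every A ⊆ Y; (3) X_{{p}} is Hausdorff for every p ∈ Y. -/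
/-- The equivalence relation on `X` whose nontrivial classes are the fibers
`f ⁻¹ {q}` for `q ∉ S`. -/
def collapseSetoid {X Y : Type*} (f : X → Y) (S : Set Y) : Setoid X where
  r x y := x = y ∨ (f x = f y ∧ f x ∉ S)
  iseqv := by
    constructor
    · intro x; exact Or.inl rfl
    · rintro x y (rfl | ⟨h, hn⟩)
      · exact Or.inl rfl
      · exact Or.inr ⟨h.symm, h ▸ hn⟩
    · rintro x y z (rfl | ⟨h1, hn1⟩) hyz
      · exact hyz
      · rcases hyz with rfl | ⟨h2, hn2⟩
        · exact Or.inr ⟨h1, hn1⟩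
        · exact Or.inr ⟨h1.trans h2, hn1⟩

/-- `f` is topologically quasiconvex: the fibers are closed and, for each entourage
`u`, only finitely many fibers fail to be `u`-small. -/
def TopQuasiconvex {X Y : Type*} [UniformSpace X] (f : X → Y) : Prop :=
  (∀ y : Y, IsClosed (f ⁻¹' {y})) ∧
    ∀ u ∈ uniformity X, {y : Y | ¬ (f ⁻¹' {y}) ×ˢ (f ⁻¹' {y}) ⊆ u}.Finite


open Filter Set Topology Uniformity in
private lemma clusterPt_mem_of_closed' {Z : Type*} [TopologicalSpace Z] {z : Z} {G : Filter Z}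
    (hz : ClusterPt z G) {s : Set Z} (hs : s ∈ G) (hc : IsClosed s) : z ∈ s :=
  hc.closure_subset (mem_closure_iff_clusterPt.2 (hz.mono (le_principal_iff.2 hs)))
open Filter Set Topology Uniformity in
private lemma t2_quotient_of_closed' {X : Type*} [TopologicalSpace X] [CompactSpace X] [T2Space X]
    (s : Setoid X) (hR : IsClosed {p : X × X | s.r p.1 p.2}) :
    T2Space (Quotient s) := by
  set q : X → Quotient s := Quotient.mk s with hq
  have hqm : IsQuotientMap q := isQuotientMap_quot_mk
  have hclosed : IsClosedMap q := by
    intro C hC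
    rw [← hqm.isClosed_preimage]
    have heq : q ⁻¹' (q '' C) = Prod.snd '' ({p : X × X | s.r p.1 p.2} ∩ C ×ˢ Set.univ) := by
      ext x
      simp only [Set.mem_preimage, Set.mem_image, Set.mem_inter_iff, Set.mem_prod,
        Set.mem_setOf_eq, Set.mem_univ, and_true, Prod.exists]
      constructor
      · rintro ⟨c, hc, hcx⟩
        exact ⟨c, x, ⟨Quotient.exact hcx, hc⟩, rfl⟩
      · rintro ⟨c, x', ⟨hr, hc⟩, rfl⟩
        exact ⟨c, hc, Quotient.sound hr⟩
    rw [heq]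
    exact isClosedMap_snd_of_compactSpace _ (hR.inter (hC.prod isClosed_univ))
  constructor
  intro z w hzw
  obtain ⟨a, rfl⟩ := hqm.surjective z
  obtain ⟨b, rfl⟩ := hqm.surjective w
  have hA : IsClosed {x | s.r x a} :=
    hR.preimage (continuous_id.prodMk continuous_const)
  have hB : IsClosed {x | s.r x b} :=
    hR.preimage (continuous_id.prodMk continuous_const)
  have hdisj : Disjoint {x | s.r x a} {x | s.r x b} := by
    rw [Set.disjoint_left]
    intro x hxa hxb
    exact hzw ((Quotient.sound hxa).symm.trans (Quotient.sound hxb))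
  obtain ⟨U, V, hUo, hVo, hAU, hBV, hUV⟩ := normal_separation hA hB hdisj
  refine ⟨(q '' Uᶜ)ᶜ, (q '' Vᶜ)ᶜ, (hclosed _ hUo.isClosed_compl).isOpen_compl,
    (hclosed _ hVo.isClosed_compl).isOpen_compl, ?_, ?_, ?_⟩
  · rintro ⟨x, hx, hxa⟩
    exact hx (hAU (Quotient.exact hxa))
  · rintro ⟨x, hx, hxb⟩
    exact hx (hBV (Quotient.exact hxb))
  · rw [Set.disjoint_left]
    intro w hw1 hw2
    obtain ⟨x, rfl⟩ := hqm.surjective w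
    have hxU : x ∈ U := by by_contra h; exact hw1 ⟨x, h, rfl⟩
    have hxV : x ∈ V := by by_contra h; exact hw2 ⟨x, h, rfl⟩
    exact Set.disjoint_left.1 hUV hxU hxV
open Filter Set Topology Uniformity in
private lemma exists_closed_entourage' {X : Type*} [UniformSpace X] [T2Space X] {x y : X}
    (h : x ≠ y) : ∃ u ∈ 𝓤 X, IsClosed u ∧ (x, y) ∉ u := by
  by_contra hc
  push_neg at hc
  exact h (eq_of_uniformity_basis uniformity_hasBasis_closed (fun {i} hi => hc i hi.1 hi.2))
open Filter Set Topology Uniformity in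
private lemma isClosed_rel_of_tqc' {X Y : Type*} [UniformSpace X] [T2Space X]
    [TopologicalSpace Y] [T2Space Y]
    (f : X → Y) (hf : Continuous f) (h : TopQuasiconvex f) (A : Set Y) :
    IsClosed {p : X × X | (collapseSetoid f A).r p.1 p.2} := by
  rw [isClosed_iff_clusterPt]
  intro z hz
  by_cases hxy : z.1 = z.2
  · exact Or.inl hxy
  obtain ⟨u, hu, huc, hzu⟩ := exists_closed_entourage' hxy
  have hS := h.2 u hu
  set S := {y : Y | ¬ (f ⁻¹' {y}) ×ˢ (f ⁻¹' {y}) ⊆ u} with hSdef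
  set R := {p : X × X | (collapseSetoid f A).r p.1 p.2} with hRdef
  have hF : (𝓝 z ⊓ 𝓟 R).NeBot := hz
  set C := {p : X × X | f p.1 = f p.2} ∩ ((fun p : X × X => f p.1) ⁻¹' (S \ A)) with hCdef
  have hCc : IsClosed C :=
    (isClosed_eq (hf.comp continuous_fst) (hf.comp continuous_snd)).inter
      (((hS.subset Set.diff_subset).isClosed).preimage (hf.comp continuous_fst))
  have hCmem : C ∈ 𝓝 z ⊓ 𝓟 R := by
    have h1 : uᶜ ∈ 𝓝 z := huc.isOpen_compl.mem_nhds hzu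
    refine mem_of_superset (inter_mem (mem_inf_of_left h1) (mem_inf_of_right (mem_principal_self _))) ?_
    rintro ⟨a, b⟩ ⟨hab, (rfl : a = b) | ⟨hfab, hfA⟩⟩
    · exact absurd (refl_mem_uniformity hu) hab
    · refine ⟨hfab, ?_, hfA⟩
      intro hsub
      exact hab (hsub ⟨rfl, hfab.symm⟩)
  have hcl : ClusterPt z (𝓟 C) :=
    hF.mono (le_inf inf_le_left (le_principal_iff.2 hCmem))
  have hzC : z ∈ C := hCc.closure_subset (mem_closure_iff_clusterPt.2 hcl)
  exact Or.inr ⟨hzC.1, hzC.2.2⟩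
open Filter Set Topology Uniformity in
private lemma tqc_of_forall_point' {X Y : Type*} [UniformSpace X] [CompactSpace X] [T2Space X]
    [TopologicalSpace Y] [CompactSpace Y] [T2Space Y]
    (f : X → Y) (hf : Continuous f)
    (h : ∀ p : Y, T2Space (Quotient (collapseSetoid f {p}))) : TopQuasiconvex f := by
  refine ⟨fun y => isClosed_singleton.preimage hf, fun u hu => ?_⟩
  by_contra hfin
  obtain ⟨v, ⟨hv, hvo⟩, hvu⟩ := uniformity_hasBasis_open.mem_iff.1 hu
  have hSu : {y : Y | ¬ (f ⁻¹' {y}) ×ˢ (f ⁻¹' {y}) ⊆ u}.Infinite := hfin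
  set S := {y : Y | ¬ (f ⁻¹' {y}) ×ˢ (f ⁻¹' {y}) ⊆ v} with hSdef
  have hS : S.Infinite := by
    refine hSu.mono ?_
    intro y hy
    simp only [hSdef, Set.mem_setOf_eq] at hy ⊢
    exact fun hsub => hy (hsub.trans hvu)
  -- a nonempty witness
  obtain ⟨y₀, hy₀⟩ := hS.nonempty
  obtain ⟨p₀, -, -⟩ := Set.not_subset.1 hy₀
  have hne : Nonempty (X × X) := ⟨p₀⟩
  -- choice of bad pairs
  have hchoice : ∀ y : Y, ∃ w : X × X, y ∈ S → f w.1 = y ∧ f w.2 = y ∧ w ∉ v := by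
    intro y
    by_cases hy : y ∈ S
    · obtain ⟨w, hw, hwv⟩ := Set.not_subset.1 hy
      exact ⟨w, fun _ => ⟨hw.1, hw.2, hwv⟩⟩
    · exact ⟨p₀, fun hy' => absurd hy' hy⟩
  choose g hg using hchoice
  -- accumulation point
  obtain ⟨p, hp⟩ := hS.exists_accPt_principal
  rw [accPt_principal_iff_clusterPt] at hp
  set F : Filter Y := 𝓝 p ⊓ 𝓟 (S \ {p}) with hFdef
  have hF : F.NeBot := hp
  have hSF : S \ {p} ∈ F := mem_inf_of_right (mem_principal_self _)
  set G : Filter (X × X) := Filter.map g F with hGdef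
  haveI : G.NeBot := hF.map g
  obtain ⟨z, hz⟩ := exists_clusterPt_of_compactSpace G
  -- z not in v
  have hzv : z ∉ v := by
    have hvmem : vᶜ ∈ G := by
      rw [hGdef, mem_map]
      exact mem_of_superset hSF (fun y hy => (hg y hy.1).2.2)
    exact clusterPt_mem_of_closed' hz hvmem hvo.isClosed_compl
  have hne12 : z.1 ≠ z.2 := by
    intro h12
    have : z = (z.1, z.1) := Prod.ext rfl h12.symm
    exact hzv (this ▸ refl_mem_uniformity hv)
  -- f z.1 = p, f z.2 = p
  have key : ∀ (pr : X × X → X), Continuous pr → (∀ y ∈ S \ {p}, f (pr (g y)) = y) →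
      f (pr z) = p := by
    intro pr hpr hpry
    have hmap : Filter.map (fun w : X × X => f (pr w)) G = F := by
      rw [hGdef, Filter.map_map]
      have : ((fun w : X × X => f (pr w)) ∘ g) =ᶠ[F] id :=
        eventually_of_mem hSF (fun y hy => hpry y hy)
      rw [map_congr this, map_id]
    have hcl : ClusterPt (f (pr z)) F := by
      rw [← hmap]
      exact hz.map ((hf.comp hpr).continuousAt) le_rfl
    exact eq_of_nhds_neBot (hcl.mono inf_le_left)
  have hfz1 : f z.1 = p := key Prod.fst continuous_fst (fun y hy => (hg y hy.1).1)
  have hfz2 : f z.2 = p := key Prod.snd continuous_snd (fun y hy => (hg y hy.1).2.1)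
  -- quotient separation
  haveI := h p
  have hqc : Continuous (Quotient.mk (collapseSetoid f {p})) := continuous_quot_mk
  have hneq : (Quotient.mk (collapseSetoid f {p}) z.1) ≠ Quotient.mk (collapseSetoid f {p}) z.2 := by
    intro heq
    rcases Quotient.exact heq with h1 | ⟨-, h2⟩
    · exact hne12 h1
    · exact h2 (by rw [hfz1]; exact rfl)
  obtain ⟨U, V, hUo, hVo, hU, hV, hUV⟩ := t2_separation hneq
  set U' := Quotient.mk (collapseSetoid f {p}) ⁻¹' U with hU'def
  set V' := Quotient.mk (collapseSetoid f {p}) ⁻¹' V with hV'def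
  have hnhds : U' ×ˢ V' ∈ 𝓝 z :=
    ((hUo.preimage hqc).prod (hVo.preimage hqc)).mem_nhds ⟨hU, hV⟩
  have hmemG : g '' (S \ {p}) ∈ G := image_mem_map hSF
  have hnon : ((U' ×ˢ V') ∩ g '' (S \ {p})).Nonempty :=
    hz.nonempty_of_mem (inter_mem (mem_inf_of_left hnhds) (mem_inf_of_right hmemG))
  obtain ⟨w, ⟨hw1, hw2⟩, y, hy, rfl⟩ := hnon
  have hrel : (collapseSetoid f {p}).r (g y).1 (g y).2 := by
    refine Or.inr ⟨by rw [(hg y hy.1).1, (hg y hy.1).2.1], ?_⟩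
    rw [(hg y hy.1).1]
    exact hy.2
  have : Quotient.mk (collapseSetoid f {p}) (g y).2 ∈ U := by
    rw [← Quotient.sound hrel]
    exact hw1
  exact Set.disjoint_left.1 hUV this hw2

/-- For a continuous surjection `f : X → Y` of compact Hausdorff spaces:
`f` is topologically quasiconvex ↔ every partial collapse `X_A` is Hausdorff ↔
every one-point collapse `X_p` is Hausdorff. -/
theorem stmt7 {X Y : Type*} [UniformSpace X] [CompactSpace X] [T2Space X]
    [TopologicalSpace Y] [CompactSpace Y] [T2Space Y]
    (f : X → Y) (hf : Continuous f) (hsurj : Function.Surjective f) :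
    (TopQuasiconvex f ↔ ∀ A : Set Y, T2Space (Quotient (collapseSetoid f A))) ∧
    ((∀ A : Set Y, T2Space (Quotient (collapseSetoid f A))) ↔
      ∀ p : Y, T2Space (Quotient (collapseSetoid f {p}))) := by
  have main1 : TopQuasiconvex f → ∀ A : Set Y, T2Space (Quotient (collapseSetoid f A)) :=
    fun h A => t2_quotient_of_closed' _ (isClosed_rel_of_tqc' f hf h A)
  have main2 : (∀ p : Y, T2Space (Quotient (collapseSetoid f {p}))) → TopQuasiconvex f :=
    tqc_of_forall_point' f hf
  exact ⟨⟨main1, fun h => main2 fun p => h {p}⟩,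
    ⟨fun h p => h {p}, fun h A => main1 (main2 h) A⟩⟩
end
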